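/- arXiv:1112.1413 — 7 statements merged into one kernel-verified Lean document; each statement's English description precedes it below -/
import Mathlib

section
/- (Existence part of the constructive commutative QLLL.) Let Π₁, Π₂, …, Π_m be mutually commuting projectors on the Hilbert space of n qudits of local dimension d, where each Πᵢ acts non-trivially only on a subset [i] of the qudits. If the projectors satisfy the Lovász conditions, then there exists a density matrix ρ on the n-qudit space such that tr(Πᵢ ρ) = 0 for every i; equivalently, there exists a nonzero vector ψ with Πᵢ ψ = 0 for all i. -/
open scoped Classical ComplexOrder

/-- A matrix on the Hilbert space of `n` qudits of local dimension `d`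
(indexed by functions `Fin n → Fin d`) acts non-trivially only on the subset
`S` of the qudits: its entries vanish off the "diagonal" outside `S`, and
depend only on the restrictions of the indices to `S`. -/
def ActsOnlyOn {n d : ℕ} (A : Matrix (Fin n → Fin d) (Fin n → Fin d) ℂ)
    (S : Finset (Fin n)) : Prop :=
  (∀ x y : Fin n → Fin d, (∃ c, c ∉ S ∧ x c ≠ y c) → A x y = 0) ∧
  (∀ x y x' y' : Fin n → Fin d,
      (∀ c ∈ S, x c = x' c) → (∀ c ∈ S, y c = y' c) →
      (∀ c ∉ S, x c = y c) → (∀ c ∉ S, x' c = y' c) →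
      A x y = A x' y')

namespace QLLLaux

variable {n d : ℕ}

lemma aoo_one (S : Finset (Fin n)) :
    ActsOnlyOn (1 : Matrix (Fin n → Fin d) (Fin n → Fin d) ℂ) S := by
  constructor
  · rintro x y ⟨c, -, hc⟩
    exact Matrix.one_apply_ne fun h => hc (by rw [h])
  · intro x y x' y' hx hy hxy hxy'
    by_cases h : x = y
    · have h' : x' = y' := by
        funext c
        by_cases hc : c ∈ S
        · rw [← hx c hc, ← hy c hc, h]
        · exact hxy' c hc
      rw [h, h', Matrix.one_apply_eq, Matrix.one_apply_eq]
    · have h' : x' ≠ y' := by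
        intro he
        apply h; funext c
        by_cases hc : c ∈ S
        · rw [hx c hc, hy c hc, he]
        · exact hxy c hc
      rw [Matrix.one_apply_ne h, Matrix.one_apply_ne h']

lemma aoo_sub {A B : Matrix (Fin n → Fin d) (Fin n → Fin d) ℂ} {S : Finset (Fin n)}
    (hA : ActsOnlyOn A S) (hB : ActsOnlyOn B S) : ActsOnlyOn (A - B) S := by
  constructor
  · intro x y h
    simp [Matrix.sub_apply, hA.1 x y h, hB.1 x y h]
  · intro x y x' y' h1 h2 h3 h4
    simp [Matrix.sub_apply, hA.2 x y x' y' h1 h2 h3 h4, hB.2 x y x' y' h1 h2 h3 h4]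

lemma aoo_mul {A B : Matrix (Fin n → Fin d) (Fin n → Fin d) ℂ} {SA SB : Finset (Fin n)}
    (hA : ActsOnlyOn A SA) (hB : ActsOnlyOn B SB) : ActsOnlyOn (A * B) (SA ∪ SB) := by
  constructor
  · rintro x y ⟨c, hc, hne⟩
    have hcA : c ∉ SA := fun h => hc (Finset.mem_union_left _ h)
    have hcB : c ∉ SB := fun h => hc (Finset.mem_union_right _ h)
    rw [Matrix.mul_apply]
    refine Finset.sum_eq_zero fun z _ => ?_
    by_cases hz : x c = z c
    · rw [hB.1 z y ⟨c, hcB, hz ▸ hne⟩, mul_zero]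
    · rw [hA.1 x z ⟨c, hcA, hz⟩, zero_mul]
  · intro x y x' y' hx hy hxy hxy'
    have hinv : Function.Involutive (fun z : Fin n → Fin d => fun c =>
        if c ∈ SA ∪ SB then z c else Equiv.swap (x c) (x' c) (z c)) := by
      intro z; funext c; by_cases hc : c ∈ SA ∪ SB <;> simp [hc]
    set τ : Equiv.Perm (Fin n → Fin d) := Function.Involutive.toPerm _ hinv with hτdef
    have hτS : ∀ (z : Fin n → Fin d), ∀ c, c ∈ SA ∪ SB → τ z c = z c := by
      intro z c hc; simp only [hτdef, Function.Involutive.coe_toPerm]; exact if_pos hc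
    have hτN : ∀ (z : Fin n → Fin d), ∀ c, c ∉ SA ∪ SB →
        τ z c = Equiv.swap (x c) (x' c) (z c) := by
      intro z c hc; simp only [hτdef, Function.Involutive.coe_toPerm]; exact if_neg hc
    rw [Matrix.mul_apply, Matrix.mul_apply,
      ← Equiv.sum_comp τ (fun z => A x' z * B z y')]
    refine Finset.sum_congr rfl fun z _ => ?_
    have hAeq : A x z = A x' (τ z) := by
      by_cases hdiag : ∀ c ∉ SA, x c = z c
      · refine hA.2 x z x' (τ z) (fun c hc => hx c (Finset.mem_union_left _ hc))
          (fun c hc => (hτS z c (Finset.mem_union_left _ hc)).symm) hdiag (fun c hc => ?_)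
        by_cases hcS : c ∈ SA ∪ SB
        · rw [hτS z c hcS, ← hdiag c hc]
          exact (hx c hcS).symm
        · rw [hτN z c hcS, ← hdiag c hc, Equiv.swap_apply_left]
      · push_neg at hdiag
        obtain ⟨c, hc, hne⟩ := hdiag
        have h1 : A x z = 0 := hA.1 x z ⟨c, hc, hne⟩
        have h2 : A x' (τ z) = 0 := by
          refine hA.1 x' (τ z) ⟨c, hc, ?_⟩
          by_cases hcS : c ∈ SA ∪ SB
          · rw [hτS z c hcS, ← hx c hcS]; exact hne
          · rw [hτN z c hcS]
            intro he
            exact hne ((Equiv.swap (x c) (x' c)).injective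
              ((Equiv.swap_apply_left (x c) (x' c)).trans he))
        rw [h1, h2]
    have hBeq : B z y = B (τ z) y' := by
      by_cases hdiag : ∀ c ∉ SB, z c = y c
      · refine hB.2 z y (τ z) y'
          (fun c hc => (hτS z c (Finset.mem_union_right _ hc)).symm)
          (fun c hc => hy c (Finset.mem_union_right _ hc)) hdiag (fun c hc => ?_)
        by_cases hcS : c ∈ SA ∪ SB
        · rw [hτS z c hcS, hdiag c hc]
          exact hy c hcS
        · have h1 : z c = x c := by rw [hdiag c hc, ← hxy c hcS]
          rw [hτN z c hcS, h1, Equiv.swap_apply_left]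
          exact hxy' c hcS
      · push_neg at hdiag
        obtain ⟨c, hc, hne⟩ := hdiag
        have h1 : B z y = 0 := hB.1 z y ⟨c, hc, hne⟩
        have h2 : B (τ z) y' = 0 := by
          refine hB.1 (τ z) y' ⟨c, hc, ?_⟩
          by_cases hcS : c ∈ SA ∪ SB
          · rw [hτS z c hcS, ← hy c hcS]; exact hne
          · rw [hτN z c hcS]
            intro he
            have hzx : z c = x c := (Equiv.swap (x c) (x' c)).injective
              (he.trans (((hxy' c hcS).symm).trans (Equiv.swap_apply_left (x c) (x' c)).symm))
            exact hne (by rw [hzx, hxy c hcS])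
        rw [h1, h2]
    rw [hAeq, hBeq]

lemma trace_factor {A B : Matrix (Fin n → Fin d) (Fin n → Fin d) ℂ} {SA SB : Finset (Fin n)}
    (hA : ActsOnlyOn A SA) (hB : ActsOnlyOn B SB) (hdis : Disjoint SA SB) :
    A.trace * B.trace = (d : ℂ) ^ n * (A * B).trace := by
  have hdiagsum : (A * B).trace = ∑ w : Fin n → Fin d, A w w * B w w := by
    rw [Matrix.trace]
    refine Finset.sum_congr rfl fun w _ => ?_
    rw [Matrix.diag_apply, Matrix.mul_apply]
    refine Finset.sum_eq_single w (fun z _ hzw => ?_) (by simp)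
    obtain ⟨c, hc⟩ : ∃ c, w c ≠ z c := by
      by_contra hno; push_neg at hno
      exact hzw (funext fun c => (hno c).symm)
    rcases (show c ∉ SA ∨ c ∉ SB by
      by_contra hno; push_neg at hno
      exact (Finset.disjoint_left.1 hdis hno.1) hno.2) with h | h
    · rw [hA.1 w z ⟨c, h, hc⟩, zero_mul]
    · rw [hB.1 z w ⟨c, h, hc.symm⟩, mul_zero]
  have hAB : ∀ u v : Fin n → Fin d,
      A u u * B v v = A (fun c => if c ∈ SA then u c else v c) (fun c => if c ∈ SA then u c else v c)
        * B (fun c => if c ∈ SA then u c else v c) (fun c => if c ∈ SA then u c else v c) := by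
    intro u v
    have h1 : A u u = A (fun c => if c ∈ SA then u c else v c) (fun c => if c ∈ SA then u c else v c) :=
      hA.2 u u _ _ (fun c hc => (if_pos hc).symm) (fun c hc => (if_pos hc).symm)
        (fun _ _ => rfl) (fun _ _ => rfl)
    have h2 : B v v = B (fun c => if c ∈ SA then u c else v c) (fun c => if c ∈ SA then u c else v c) :=
      hB.2 v v _ _ (fun c hc => (if_neg (Finset.disjoint_right.1 hdis hc)).symm)
        (fun c hc => (if_neg (Finset.disjoint_right.1 hdis hc)).symm)
        (fun _ _ => rfl) (fun _ _ => rfl)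
    rw [← h1, ← h2]
  have hbij : Function.Bijective (fun p : (Fin n → Fin d) × (Fin n → Fin d) =>
      ((fun c => if c ∈ SA then p.1 c else p.2 c), (fun c => if c ∈ SA then p.2 c else p.1 c))) := by
    have : Function.Involutive (fun p : (Fin n → Fin d) × (Fin n → Fin d) =>
        ((fun c => if c ∈ SA then p.1 c else p.2 c), (fun c => if c ∈ SA then p.2 c else p.1 c))) := by
      rintro ⟨u, v⟩
      refine Prod.ext (funext fun c => ?_) (funext fun c => ?_) <;>
        by_cases hc : c ∈ SA <;> simp [hc]
    exact this.bijective
  have hcard : (Fintype.card (Fin n → Fin d) : ℂ) = (d : ℂ) ^ n := by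
    simp [Fintype.card_fun]
  calc A.trace * B.trace
      = ∑ u : Fin n → Fin d, ∑ v : Fin n → Fin d, A u u * B v v := by
        rw [Matrix.trace, Matrix.trace, Finset.sum_mul_sum]
        rfl
    _ = ∑ p : (Fin n → Fin d) × (Fin n → Fin d), A p.1 p.1 * B p.2 p.2 := by
        rw [Fintype.sum_prod_type]
    _ = ∑ p : (Fin n → Fin d) × (Fin n → Fin d),
          (fun q : (Fin n → Fin d) × (Fin n → Fin d) => A q.1 q.1 * B q.1 q.1)
          (((fun c => if c ∈ SA then p.1 c else p.2 c), (fun c => if c ∈ SA then p.2 c else p.1 c))) := by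
        refine Finset.sum_congr rfl fun p _ => ?_
        exact hAB p.1 p.2
    _ = ∑ q : (Fin n → Fin d) × (Fin n → Fin d), A q.1 q.1 * B q.1 q.1 := by
        exact Function.Bijective.sum_comp hbij (fun q => A q.1 q.1 * B q.1 q.1)
    _ = ∑ u : Fin n → Fin d, ∑ _v : Fin n → Fin d, A u u * B u u := by
        rw [Fintype.sum_prod_type]
    _ = (d : ℂ) ^ n * ∑ w : Fin n → Fin d, A w w * B w w := by
        rw [Finset.mul_sum]
        refine Finset.sum_congr rfl fun u _ => ?_
        rw [Finset.sum_const, Finset.card_univ, nsmul_eq_mul, hcard]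
    _ = (d : ℂ) ^ n * (A * B).trace := by rw [hdiagsum]



lemma projector_trace_eq_rank {N : Type*} [Fintype N] [DecidableEq N]
    {A : Matrix N N ℂ} (hA : A.IsHermitian) (h2 : A * A = A) :
    A.trace = (A.rank : ℂ) := by
  have hU1 : (star (hA.eigenvectorUnitary : Matrix N N ℂ)) * hA.eigenvectorUnitary = 1 :=
    Unitary.coe_star_mul_self hA.eigenvectorUnitary
  have hU2 : (hA.eigenvectorUnitary : Matrix N N ℂ) * star (hA.eigenvectorUnitary : Matrix N N ℂ) = 1 :=
    Unitary.coe_mul_star_self hA.eigenvectorUnitary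
  have hD := hA.conjStarAlgAut_star_eigenvectorUnitary
  rw [Unitary.conjStarAlgAut_star_apply] at hD
  -- eigenvalues are 0 or 1
  have hDD : Matrix.diagonal (RCLike.ofReal ∘ hA.eigenvalues : N → ℂ) * Matrix.diagonal (RCLike.ofReal ∘ hA.eigenvalues) =
      Matrix.diagonal (RCLike.ofReal ∘ hA.eigenvalues) := by
    rw [← hD]
    calc (star (hA.eigenvectorUnitary : Matrix N N ℂ) * A * hA.eigenvectorUnitary) *
          (star (hA.eigenvectorUnitary : Matrix N N ℂ) * A * hA.eigenvectorUnitary)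
        = star (hA.eigenvectorUnitary : Matrix N N ℂ) * A *
            ((hA.eigenvectorUnitary : Matrix N N ℂ) * star (hA.eigenvectorUnitary : Matrix N N ℂ)) *
            A * hA.eigenvectorUnitary := by noncomm_ring
      _ = star (hA.eigenvectorUnitary : Matrix N N ℂ) * (A * A) * hA.eigenvectorUnitary := by
          rw [hU2]; noncomm_ring
      _ = star (hA.eigenvectorUnitary : Matrix N N ℂ) * A * hA.eigenvectorUnitary := by
          rw [h2]
  have heig : ∀ i, hA.eigenvalues i = 0 ∨ hA.eigenvalues i = 1 := by
    intro i
    rw [Matrix.diagonal_mul_diagonal] at hDD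
    have := congrFun (Matrix.diagonal_injective hDD) i
    simp only [Pi.mul_apply, Function.comp_apply] at this
    have hre : hA.eigenvalues i * hA.eigenvalues i = hA.eigenvalues i := by
      exact_mod_cast this
    rcases mul_eq_zero.1 (by ring_nf; linear_combination hre : hA.eigenvalues i * (hA.eigenvalues i - 1) = 0) with h | h
    · exact Or.inl h
    · exact Or.inr (by linarith [sub_eq_zero.1 h])
  -- trace = sum of eigenvalues
  have htr : A.trace = ∑ i, (hA.eigenvalues i : ℂ) := by
    conv_lhs => rw [hA.spectral_theorem, Unitary.conjStarAlgAut_apply]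
    rw [Matrix.trace_mul_comm, ← mul_assoc, hU1, one_mul, Matrix.trace_diagonal]
    rfl
  have hrank := hA.rank_eq_card_non_zero_eigs
  have hval : ∀ i, (hA.eigenvalues i : ℂ) = if hA.eigenvalues i ≠ 0 then 1 else 0 := by
    intro i; rcases heig i with h | h <;> simp [h]
  rw [htr, hrank, Fintype.card_subtype, Finset.sum_congr rfl fun i _ => hval i,
    Finset.sum_boole]



variable {n d m : ℕ} (P : Fin m → Matrix (Fin n → Fin d) (Fin n → Fin d) ℂ)

noncomputable def KP (hc : ∀ i j, Commute (P i) (P j)) (T : Finset (Fin m)) :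
    Matrix (Fin n → Fin d) (Fin n → Fin d) ℂ :=
  T.noncommProd (fun j => 1 - P j)
    (fun a _ b _ _ => (Commute.one_left _).sub_left ((Commute.one_right _).sub_right (hc a b)))

variable (hc : ∀ i j, Commute (P i) (P j))

lemma KP_empty : KP P hc ∅ = 1 := Finset.noncommProd_empty _ _

lemma KP_insert {i : Fin m} {T : Finset (Fin m)} (h : i ∉ T) :
    KP P hc (insert i T) = (1 - P i) * KP P hc T :=
  Finset.noncommProd_insert_of_notMem _ _ _ _ h

lemma commute_KP (j : Fin m) (T : Finset (Fin m)) : Commute (P j) (KP P hc T) :=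
  Finset.noncommProd_commute _ _ _ _
    (fun a _ => (Commute.one_right _).sub_right (hc j a))

lemma herm_mul {A B : Matrix (Fin n → Fin d) (Fin n → Fin d) ℂ}
    (hA : A.IsHermitian) (hB : B.IsHermitian) (hAB : Commute A B) :
    (A * B).IsHermitian := by
  unfold Matrix.IsHermitian
  rw [Matrix.conjTranspose_mul, hA.eq, hB.eq, hAB.eq]

lemma idem_mul {A B : Matrix (Fin n → Fin d) (Fin n → Fin d) ℂ}
    (hA : A * A = A) (hB : B * B = B) (hAB : Commute A B) :
    (A * B) * (A * B) = A * B := by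
  calc (A * B) * (A * B) = A * (B * A) * B := by noncomm_ring
    _ = A * (A * B) * B := by rw [hAB.eq]
    _ = (A * A) * (B * B) := by noncomm_ring
    _ = A * B := by rw [hA, hB]

lemma KP_herm (hherm : ∀ i, (P i).IsHermitian) (T : Finset (Fin m)) :
    (KP P hc T).IsHermitian := by
  induction T using Finset.induction_on with
  | empty => rw [KP_empty]; exact Matrix.isHermitian_one
  | insert _ _ hiT ih =>
    rw [KP_insert P hc hiT]
    exact herm_mul (Matrix.isHermitian_one.sub (hherm _)) ih
      ((Commute.one_left _).sub_left (commute_KP P hc _ _))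

lemma KP_idem (hidem : ∀ i, P i * P i = P i) (T : Finset (Fin m)) :
    KP P hc T * KP P hc T = KP P hc T := by
  induction T using Finset.induction_on with
  | empty => rw [KP_empty, one_mul]
  | @insert i T hiT ih =>
    rw [KP_insert P hc hiT]
    refine idem_mul ?_ ih ((Commute.one_left _).sub_left (commute_KP P hc _ _))
    rw [sub_mul, one_mul, mul_sub, mul_one, hidem i, sub_self, sub_zero]


lemma KP_acts (S : Fin m → Finset (Fin n)) (hloc : ∀ i, ActsOnlyOn (P i) (S i))
    (T : Finset (Fin m)) : ActsOnlyOn (KP P hc T) (T.biUnion S) := by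
  induction T using Finset.induction_on with
  | empty => rw [KP_empty, Finset.biUnion_empty]; exact aoo_one _
  | @insert i T hiT ih =>
    rw [KP_insert P hc hiT, Finset.biUnion_insert]
    exact aoo_mul (aoo_sub (aoo_one _) (hloc i)) ih

lemma PK_herm (hherm : ∀ i, (P i).IsHermitian) (i : Fin m) (T : Finset (Fin m)) :
    (P i * KP P hc T).IsHermitian :=
  herm_mul (hherm i) (KP_herm P hc hherm T) (commute_KP P hc i T)

lemma PK_idem (hidem : ∀ i, P i * P i = P i) (i : Fin m) (T : Finset (Fin m)) :
    (P i * KP P hc T) * (P i * KP P hc T) = P i * KP P hc T :=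
  idem_mul (hidem i) (KP_idem P hc hidem T) (commute_KP P hc i T)

lemma PK_trace (hherm : ∀ i, (P i).IsHermitian) (hidem : ∀ i, P i * P i = P i)
    (i : Fin m) (T : Finset (Fin m)) :
    (P i * KP P hc T).trace = ((P i * KP P hc T).rank : ℂ) :=
  projector_trace_eq_rank (PK_herm P hc hherm i T) (PK_idem P hc hidem i T)

lemma KP_trace (hherm : ∀ i, (P i).IsHermitian) (hidem : ∀ i, P i * P i = P i)
    (T : Finset (Fin m)) :
    (KP P hc T).trace = ((KP P hc T).rank : ℂ) :=
  projector_trace_eq_rank (KP_herm P hc hherm T) (KP_idem P hc hidem T)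

lemma nu_insert_le (hherm : ∀ i, (P i).IsHermitian) (hidem : ∀ i, P i * P i = P i)
    (i j : Fin m) (T : Finset (Fin m)) (hjT : j ∉ T) :
    ((P i * KP P hc (insert j T)).trace).re ≤ ((P i * KP P hc T).trace).re := by
  have hexp : P i * KP P hc (insert j T)
      = P i * KP P hc T - (P i * P j) * KP P hc T := by
    rw [KP_insert P hc hjT, sub_mul, one_mul, mul_sub, mul_assoc]
  have hijherm : (P i * P j).IsHermitian := herm_mul (hherm i) (hherm j) (hc i j)
  have hijidem : (P i * P j) * (P i * P j) = P i * P j :=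
    idem_mul (hidem i) (hidem j) (hc i j)
  have hcomm3 : Commute (P i * P j) (KP P hc T) :=
    (commute_KP P hc i T).mul_left (commute_KP P hc j T)
  have h3 : ((P i * P j) * KP P hc T).trace
      = (((P i * P j) * KP P hc T).rank : ℂ) :=
    projector_trace_eq_rank
      (herm_mul hijherm (KP_herm P hc hherm T) hcomm3)
      (idem_mul hijidem (KP_idem P hc hidem T) hcomm3)
  rw [hexp, Matrix.trace_sub, Complex.sub_re, h3]
  simp only [Complex.natCast_re]
  have : (0 : ℝ) ≤ (((P i * P j) * KP P hc T).rank : ℝ) := Nat.cast_nonneg _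
  linarith

lemma nu_union_le (hherm : ∀ i, (P i).IsHermitian) (hidem : ∀ i, P i * P i = P i)
    (i : Fin m) (T U : Finset (Fin m)) :
    ((P i * KP P hc (T ∪ U)).trace).re ≤ ((P i * KP P hc T).trace).re := by
  induction U using Finset.induction_on with
  | empty => rw [Finset.union_empty]
  | @insert j U hjU ih =>
    rw [Finset.union_insert]
    by_cases hj : j ∈ T ∪ U
    · rw [Finset.insert_eq_self.2 hj]; exact ih
    · exact le_trans (nu_insert_le P hc hherm hidem i j (T ∪ U) hj) ih

lemma mu_insert (i : Fin m) (T : Finset (Fin m)) (hiT : i ∉ T) :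
    ((KP P hc (insert i T)).trace).re
      = ((KP P hc T).trace).re - ((P i * KP P hc T).trace).re := by
  rw [KP_insert P hc hiT, sub_mul, one_mul, Matrix.trace_sub, Complex.sub_re]

section Key

variable (S : Fin m → Finset (Fin n)) (x : Fin m → ℝ)
variable (hherm : ∀ i, (P i).IsHermitian) (hidem : ∀ i, P i * P i = P i)
variable (hloc : ∀ i, ActsOnlyOn (P i) (S i))
variable (hx0 : ∀ i, 0 ≤ x i) (hx1 : ∀ i, x i < 1) (hd : 0 < d)
variable (hLov : ∀ i, ((P i).rank : ℝ) / ((d : ℝ) ^ n) ≤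
        x i * ∏ j ∈ Finset.univ.filter
          (fun j => j ≠ i ∧ (S i ∩ S j).Nonempty), (1 - x j))

include hherm hidem hloc hx0 hx1 hd hLov in
lemma qlll_key :
    ∀ T : Finset (Fin m), ∀ i ∉ T,
      ((P i * KP P hc T).trace).re ≤ x i * ((KP P hc T).trace).re := by
  intro T
  induction T using Finset.strongInduction with
  | _ T ih =>
    intro i hiT
    have hdn : (0:ℝ) < (d:ℝ) ^ n := pow_pos (by exact_mod_cast hd) n
    set T1 := T.filter (fun j => (S i ∩ S j).Nonempty) with hT1
    set T2 := T.filter (fun j => ¬ (S i ∩ S j).Nonempty) with hT2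
    have hT1T : T1 ⊆ T := Finset.filter_subset _ _
    have hT2T : T2 ⊆ T := Finset.filter_subset _ _
    have hunion : T2 ∪ T1 = T := by
      rw [hT2, hT1, Finset.union_comm, Finset.filter_union_filter_not_eq]
    -- Step A : monotonicity
    have hstepA : ((P i * KP P hc T).trace).re ≤ ((P i * KP P hc T2).trace).re := by
      have h1 : T2 ∪ (T \ T2) = T := Finset.union_sdiff_of_subset hT2T
      have := nu_union_le P hc hherm hidem i T2 (T \ T2)
      rwa [h1] at this
    -- Step B : independence
    have hdisj : Disjoint (S i) (T2.biUnion S) := by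
      rw [Finset.disjoint_biUnion_right]
      intro j hj
      rw [hT2, Finset.mem_filter] at hj
      rw [Finset.disjoint_iff_inter_eq_empty]
      exact Finset.not_nonempty_iff_eq_empty.1 hj.2
    have hfac := trace_factor (hloc i) (KP_acts P hc S hloc T2) hdisj
    rw [projector_trace_eq_rank (hherm i) (hidem i),
      KP_trace P hc hherm hidem, PK_trace P hc hherm hidem] at hfac
    have hnat : (P i).rank * (KP P hc T2).rank = d ^ n * (P i * KP P hc T2).rank := by
      exact_mod_cast hfac
    have hnureal : ((P i * KP P hc T2).trace).re
        = ((P i).rank : ℝ) * ((KP P hc T2).rank : ℝ) / (d:ℝ) ^ n := by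
      rw [PK_trace P hc hherm hidem, Complex.natCast_re, eq_div_iff (ne_of_gt hdn)]
      have : (((P i).rank * (KP P hc T2).rank : ℕ) : ℝ)
          = ((d ^ n * (P i * KP P hc T2).rank : ℕ) : ℝ) := by exact_mod_cast hnat
      push_cast at this
      linarith
    have hmuT2 : ((KP P hc T2).trace).re = ((KP P hc T2).rank : ℝ) := by
      rw [KP_trace P hc hherm hidem, Complex.natCast_re]
    have hmuT2nn : (0:ℝ) ≤ ((KP P hc T2).trace).re := by
      rw [hmuT2]; exact Nat.cast_nonneg _
    have hstepB : ((P i * KP P hc T2).trace).re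
        ≤ (x i * ∏ j ∈ Finset.univ.filter
            (fun j => j ≠ i ∧ (S i ∩ S j).Nonempty), (1 - x j)) * ((KP P hc T2).trace).re := by
      rw [hnureal, hmuT2]
      have h1 : ((P i).rank : ℝ) * ((KP P hc T2).rank : ℝ) / (d:ℝ) ^ n
          = (((P i).rank : ℝ) / (d:ℝ) ^ n) * ((KP P hc T2).rank : ℝ) := by ring
      rw [h1]
      exact mul_le_mul_of_nonneg_right (hLov i) (Nat.cast_nonneg _)
    -- Step C : opening up the neighbours
    have hstepC : ∀ U ⊆ T1,
        (∏ j ∈ U, (1 - x j)) * ((KP P hc T2).trace).re ≤ ((KP P hc (T2 ∪ U)).trace).re := by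
      intro U
      induction U using Finset.induction_on with
      | empty => intro _; rw [Finset.prod_empty, one_mul, Finset.union_empty]
      | @insert j U hjU ihU =>
        intro hins
        have hjT1 : j ∈ T1 := hins (Finset.mem_insert_self _ _)
        have hUsub : U ⊆ T1 := fun a ha => hins (Finset.mem_insert_of_mem ha)
        have hjT2U : j ∉ T2 ∪ U := by
          intro hmem
          rcases Finset.mem_union.1 hmem with h | h
          · rw [hT2, Finset.mem_filter] at h
            rw [hT1, Finset.mem_filter] at hjT1
            exact h.2 hjT1.2
          · exact hjU h
        have hssub : T2 ∪ U ⊂ T := by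
          refine (Finset.ssubset_iff_of_subset
            (Finset.union_subset hT2T (hUsub.trans hT1T))).2 ⟨j, hT1T hjT1, hjT2U⟩
        have hkey := ih (T2 ∪ U) hssub j hjT2U
        have hmuval := mu_insert P hc j (T2 ∪ U) hjT2U
        have hxj : (0:ℝ) < 1 - x j := by linarith [hx1 j]
        have hprev := ihU hUsub
        have hmuUnn : (0:ℝ) ≤ ((KP P hc (T2 ∪ U)).trace).re := by
          rw [KP_trace P hc hherm hidem, Complex.natCast_re]; exact Nat.cast_nonneg _
        have h2 : (1 - x j) * ((KP P hc (T2 ∪ U)).trace).re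
            ≤ ((KP P hc (insert j (T2 ∪ U))).trace).re := by
          rw [hmuval]; nlinarith [hkey]
        have h3 : T2 ∪ insert j U = insert j (T2 ∪ U) := Finset.union_insert j T2 U
        rw [Finset.prod_insert hjU, h3]
        calc (1 - x j) * (∏ k ∈ U, (1 - x k)) * ((KP P hc T2).trace).re
            = (1 - x j) * ((∏ k ∈ U, (1 - x k)) * ((KP P hc T2).trace).re) := by ring
          _ ≤ (1 - x j) * ((KP P hc (T2 ∪ U)).trace).re :=
              mul_le_mul_of_nonneg_left hprev (le_of_lt hxj)
          _ ≤ ((KP P hc (insert j (T2 ∪ U))).trace).re := h2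
    -- Step D : products over neighbourhoods
    have hT1sub : T1 ⊆ Finset.univ.filter (fun j => j ≠ i ∧ (S i ∩ S j).Nonempty) := by
      intro j hj
      rw [hT1, Finset.mem_filter] at hj
      refine Finset.mem_filter.2 ⟨Finset.mem_univ _, ⟨?_, hj.2⟩⟩
      intro hji; exact hiT (hji ▸ hj.1)
    have hprodD : (∏ j ∈ Finset.univ.filter
          (fun j => j ≠ i ∧ (S i ∩ S j).Nonempty), (1 - x j)) ≤ ∏ j ∈ T1, (1 - x j) := by
      rw [← Finset.prod_sdiff hT1sub]
      have h1 : (∏ j ∈ (Finset.univ.filter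
          (fun j => j ≠ i ∧ (S i ∩ S j).Nonempty)) \ T1, (1 - x j)) ≤ 1 :=
        Finset.prod_le_one (fun j _ => by linarith [hx1 j]) (fun j _ => by linarith [hx0 j])
      have h2 : (0:ℝ) ≤ ∏ j ∈ T1, (1 - x j) :=
        Finset.prod_nonneg (fun j _ => by linarith [hx1 j])
      exact mul_le_of_le_one_left h2 h1
    -- Combine
    have hfinal : (∏ j ∈ T1, (1 - x j)) * ((KP P hc T2).trace).re
        ≤ ((KP P hc T).trace).re := by
      have := hstepC T1 (le_refl T1)
      rwa [hunion] at this
    calc ((P i * KP P hc T).trace).re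
        ≤ ((P i * KP P hc T2).trace).re := hstepA
      _ ≤ (x i * ∏ j ∈ Finset.univ.filter
            (fun j => j ≠ i ∧ (S i ∩ S j).Nonempty), (1 - x j)) * ((KP P hc T2).trace).re := hstepB
      _ ≤ (x i * ∏ j ∈ T1, (1 - x j)) * ((KP P hc T2).trace).re := by
          refine mul_le_mul_of_nonneg_right ?_ hmuT2nn
          exact mul_le_mul_of_nonneg_left hprodD (hx0 i)
      _ = x i * ((∏ j ∈ T1, (1 - x j)) * ((KP P hc T2).trace).re) := by ring
      _ ≤ x i * ((KP P hc T).trace).re := mul_le_mul_of_nonneg_left hfinal (hx0 i)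

include hherm hidem hloc hx0 hx1 hd hLov in
lemma mu_lower : ∀ T : Finset (Fin m),
    (∏ j ∈ T, (1 - x j)) * (d:ℝ) ^ n ≤ ((KP P hc T).trace).re := by
  intro T
  induction T using Finset.induction_on with
  | empty =>
    rw [Finset.prod_empty, one_mul, KP_empty, Matrix.trace_one]
    have h1 : (Fintype.card (Fin n → Fin d) : ℂ) = ((d ^ n : ℕ) : ℂ) := by
      simp [Fintype.card_fun]
    rw [h1, Complex.natCast_re]
    push_cast
    exact le_refl _
  | @insert i T hiT ih =>
    have hkey := qlll_key P hc S x hherm hidem hloc hx0 hx1 hd hLov T i hiT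
    have hmu := mu_insert P hc i T hiT
    have hxi : (0:ℝ) < 1 - x i := by linarith [hx1 i]
    have hmuTnn : (0:ℝ) ≤ ((KP P hc T).trace).re := by
      rw [KP_trace P hc hherm hidem, Complex.natCast_re]; exact Nat.cast_nonneg _
    rw [Finset.prod_insert hiT, hmu]
    have hprodnn : (0:ℝ) ≤ ∏ j ∈ T, (1 - x j) :=
      Finset.prod_nonneg (fun j _ => by linarith [hx1 j])
    have hdn : (0:ℝ) ≤ (d:ℝ) ^ n := le_of_lt (pow_pos (by exact_mod_cast hd) n)
    nlinarith [ih]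

end Key

end QLLLaux

open QLLLaux

/-- **Existence part of the constructive commutative QLLL.** Mutually commuting
projectors on `n` qudits satisfying the Lovász conditions admit a density
matrix `ρ` with `tr(Πᵢ ρ) = 0` for all `i`; equivalently, a nonzero vector `ψ`
with `Πᵢ ψ = 0` for all `i`. -/
theorem constructive_commutative_qlll_existence
    (n d : ℕ) (hn : 1 ≤ n) (hd : 2 ≤ d)
    (m : ℕ) (P : Fin m → Matrix (Fin n → Fin d) (Fin n → Fin d) ℂ)
    (S : Fin m → Finset (Fin n))
    (hherm : ∀ i, (P i).IsHermitian)
    (hidem : ∀ i, P i * P i = P i)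
    (hcomm : ∀ i j, P i * P j = P j * P i)
    (hloc : ∀ i, ActsOnlyOn (P i) (S i))
    (x : Fin m → ℝ) (hx0 : ∀ i, 0 ≤ x i) (hx1 : ∀ i, x i < 1)
    (hLov : ∀ i, ((P i).rank : ℝ) / ((d : ℝ) ^ n) ≤
        x i * ∏ j ∈ Finset.univ.filter
          (fun j => j ≠ i ∧ (S i ∩ S j).Nonempty), (1 - x j)) :
    (∃ ρ : Matrix (Fin n → Fin d) (Fin n → Fin d) ℂ,
        ρ.PosSemidef ∧ ρ.trace = 1 ∧ ∀ i, (P i * ρ).trace = 0) ∧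
    (∃ ψ : (Fin n → Fin d) → ℂ, ψ ≠ 0 ∧ ∀ i, (P i).mulVec ψ = 0) := by
  have hc : ∀ i j, Commute (P i) (P j) := hcomm
  have hd0 : 0 < d := lt_of_lt_of_le (by norm_num) hd
  set K := KP P hc Finset.univ with hK
  -- positivity of the trace of K
  have hlb := mu_lower P hc S x hherm hidem hloc hx0 hx1 hd0 hLov Finset.univ
  have hprodpos : (0:ℝ) < ∏ j : Fin m, (1 - x j) :=
    Finset.prod_pos (fun j _ => by linarith [hx1 j])
  have hdn : (0:ℝ) < (d:ℝ) ^ n := pow_pos (by exact_mod_cast hd0) n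
  have htrpos : (0:ℝ) < (K.trace).re := lt_of_lt_of_le (by positivity) hlb
  have hKtr : K.trace = (K.rank : ℂ) := KP_trace P hc hherm hidem Finset.univ

  have hKherm : K.IsHermitian := KP_herm P hc hherm Finset.univ
  have hKidem : K * K = K := KP_idem P hc hidem Finset.univ
  -- P i * K = 0
  have hPK : ∀ i, P i * K = 0 := by
    intro i
    have h1 : Finset.univ = insert i ((Finset.univ : Finset (Fin m)).erase i) :=
      (Finset.insert_erase (Finset.mem_univ i)).symm
    have h2 : K = (1 - P i) * KP P hc ((Finset.univ : Finset (Fin m)).erase i) := by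
      conv_lhs => rw [hK, h1]
      exact KP_insert P hc (Finset.notMem_erase i _)
    rw [h2, ← mul_assoc]
    have h3 : P i * (1 - P i) = 0 := by
      rw [mul_sub, mul_one, hidem i, sub_self]
    rw [h3, zero_mul]
  have hrC : (K.rank : ℂ) ≠ 0 := by
    intro h0
    rw [hKtr, h0] at htrpos
    simp at htrpos
  constructor
  · -- density matrix
    refine ⟨((K.rank : ℂ))⁻¹ • K, ?_, ?_, ?_⟩
    · -- PosSemidef
      have hc0 : (0:ℝ) ≤ ((K.rank : ℝ))⁻¹ := by positivity
      have hBB : Matrix.conjTranspose ((Complex.ofReal (Real.sqrt ((K.rank : ℝ)⁻¹))) • K) *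
          ((Complex.ofReal (Real.sqrt ((K.rank : ℝ)⁻¹))) • K) = ((K.rank : ℂ))⁻¹ • K := by
        rw [Matrix.conjTranspose_smul, Matrix.smul_mul, Matrix.mul_smul, smul_smul,
          hKherm.eq, hKidem]
        congr 1
        rw [Complex.star_def, Complex.conj_ofReal, ← Complex.ofReal_mul,
          Real.mul_self_sqrt hc0, Complex.ofReal_inv, Complex.ofReal_natCast]
      rw [← hBB]
      exact Matrix.posSemidef_conjTranspose_mul_self _
    · rw [Matrix.trace_smul, hKtr, smul_eq_mul, inv_mul_cancel₀ hrC]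
    · intro i
      rw [Matrix.mul_smul, hPK i, smul_zero, Matrix.trace_zero]
  · -- nonzero vector
    have hKne : K ≠ 0 := by
      intro h
      rw [h, Matrix.trace_zero] at htrpos
      simp at htrpos
    obtain ⟨a, b, hab⟩ : ∃ a b, K a b ≠ 0 := by
      by_contra hno
      push_neg at hno
      exact hKne (Matrix.ext fun a b => hno a b)
    refine ⟨fun r => K r b, ?_, ?_⟩
    · intro h
      exact hab (congrFun h a)
    · intro i
      funext r
      have : (P i).mulVec (fun s => K s b) r = (P i * K) r b := by
        rw [Matrix.mulVec, Matrix.mul_apply]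
        rfl
      rw [this, hPK i]
      rfl
end

section
/- (Halting-measurement bound, commuting case.) Let Π₁, …, Π_m be mutually commuting projectors on ℂ^D (m ≥ 1, D ≥ 1). Then for every index a ∈ {1,…,m} and every integer T ≥ 0, the positive semidefinite matrix (1/m) · Σ_{t=0}^{T} (1/mᵗ) · Σ_{(i₁,…,i_t) ∈ {1,…,m}ᵗ} Π_a (I−Π_{i_t}) ⋯ (I−Π_{i₁}) (I/D) (I−Π_{i₁}) ⋯ (I−Π_{i_t}) Π_a is ≤ (1/D) Π_a in the Loewner order; in particular its trace is at most rank(Π_a)/D. -/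
open scoped ComplexOrder

/-- The ordered product `(I−Π_{i_t})⋯(I−Π_{i₁})`. -/
noncomputable def chainRev {D m : ℕ} (P : Fin m → Matrix (Fin D) (Fin D) ℂ)
    (t : ℕ) (i : Fin t → Fin m) : Matrix (Fin D) (Fin D) ℂ :=
  ((List.finRange t).reverse.map (fun s => 1 - P (i s))).prod

/-- The ordered product `(I−Π_{i₁})⋯(I−Π_{i_t})`. -/
noncomputable def chainFwd {D m : ℕ} (P : Fin m → Matrix (Fin D) (Fin D) ℂ)
    (t : ℕ) (i : Fin t → Fin m) : Matrix (Fin D) (Fin D) ℂ :=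
  ((List.finRange t).map (fun s => 1 - P (i s))).prod

/-- The (unnormalised) operator
`(1/m) Σ_{t=0}^{T} (1/mᵗ) Σ_{i₁,…,i_t} Π_a (I−Π_{i_t})⋯(I−Π_{i₁}) (I/D) (I−Π_{i₁})⋯(I−Π_{i_t}) Π_a`. -/
noncomputable def haltMat {D m : ℕ} (P : Fin m → Matrix (Fin D) (Fin D) ℂ)
    (a : Fin m) (T : ℕ) : Matrix (Fin D) (Fin D) ℂ :=
  ((1 : ℂ) / m) • ∑ t ∈ Finset.range (T + 1),
    ((1 : ℂ) / (m : ℂ) ^ t) • ∑ i : Fin t → Fin m,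
      P a * chainRev P t i * (((1 : ℂ) / D) • 1) * chainFwd P t i * P a


section Helpers
namespace HaltAux

open Matrix

variable {D : ℕ}

lemma psd_smul {A : Matrix (Fin D) (Fin D) ℂ} (hA : A.PosSemidef) {c : ℝ} (hc : 0 ≤ c) :
    ((c : ℂ) • A).PosSemidef := by
  rw [Matrix.posSemidef_iff_dotProduct_mulVec]
  constructor
  · have h := hA.1
    unfold Matrix.IsHermitian at *
    rw [Matrix.conjTranspose_smul, h]
    norm_num
  · intro x
    rw [Matrix.smul_mulVec, dotProduct_smul]
    have : (0:ℂ) ≤ (c:ℂ) := by exact_mod_cast hc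
    exact mul_nonneg this (hA.dotProduct_mulVec_nonneg x)

lemma psd_sum {ι : Type*} (s : Finset ι) (f : ι → Matrix (Fin D) (Fin D) ℂ)
    (h : ∀ i ∈ s, (f i).PosSemidef) : (∑ i ∈ s, f i).PosSemidef := by
  classical
  induction s using Finset.induction with
  | empty => simpa using Matrix.PosSemidef.zero
  | insert _ _ hx ih =>
    rw [Finset.sum_insert hx]
    exact (h _ (Finset.mem_insert_self _ _)).add
      (ih fun i hi => h i (Finset.mem_insert_of_mem hi))

lemma psd_trace_re_nonneg {A : Matrix (Fin D) (Fin D) ℂ} (hA : A.PosSemidef) :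
    0 ≤ A.trace.re := by
  have h : ∀ i, (0:ℂ) ≤ A i i := by
    intro i
    have h2 := hA.dotProduct_mulVec_nonneg (Pi.single i 1)
    simpa [Matrix.mulVec_single, dotProduct, Pi.single_apply, Finset.sum_ite_eq,
      apply_ite] using h2
  have : A.trace.re = ∑ i, (A i i).re := by
    simp [Matrix.trace, Matrix.diag, Complex.re_sum]
  rw [this]
  exact Finset.sum_nonneg fun i _ => (Complex.le_def.mp (h i)).1

lemma proj_psd {A : Matrix (Fin D) (Fin D) ℂ} (hA : A.IsHermitian) (h2 : A * A = A) :
    A.PosSemidef := by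
  have h3 : Aᴴ * A = A := by rw [hA]; exact h2
  rw [← h3]
  exact Matrix.posSemidef_conjTranspose_mul_self A


lemma conj_pow {U B : Matrix (Fin D) (Fin D) ℂ} (hUU : U * star U = 1)
    (hsUU : star U * U = 1) (t : ℕ) : (U * B * star U) ^ t = U * B ^ t * star U := by
  induction t with
  | zero => simpa using hUU.symm
  | succ k ih =>
    rw [pow_succ, ih, pow_succ]
    calc U * B ^ k * star U * (U * B * star U)
        = U * B ^ k * (star U * U) * B * star U := by noncomm_ring
      _ = U * (B ^ k * B) * star U := by rw [hsUU]; noncomm_ring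

lemma pow_le_smul_one {A : Matrix (Fin D) (Fin D) ℂ} {r : ℝ} (hr0 : 0 ≤ r)
    (hA : A.PosSemidef) (hr : ((r : ℂ) • 1 - A).PosSemidef) (t : ℕ) :
    (((r ^ t : ℝ) : ℂ) • 1 - A ^ t).PosSemidef := by
  classical
  have hH := hA.1
  set U : Matrix (Fin D) (Fin D) ℂ := (hH.eigenvectorUnitary : Matrix (Fin D) (Fin D) ℂ) with hU
  set d := hH.eigenvalues with hd
  have hUU : U * star U = 1 := (Matrix.mem_unitaryGroup_iff).mp hH.eigenvectorUnitary.2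
  have hsUU : star U * U = 1 := (Matrix.mem_unitaryGroup_iff').mp hH.eigenvectorUnitary.2
  have hspec : A = U * Matrix.diagonal (fun i => (d i : ℂ)) * star U := by
    simpa [Function.comp_def] using hH.spectral_theorem
  -- eigenvalue bounds
  have hnn : ∀ i, 0 ≤ d i := fun i => hA.eigenvalues_nonneg i
  have hle : ∀ i, d i ≤ r := by
    intro i
    have h1 : (Uᴴ * ((r : ℂ) • 1 - A) * U).PosSemidef := hr.conjTranspose_mul_mul_same U
    have h2 : Uᴴ * ((r : ℂ) • 1 - A) * U
        = Matrix.diagonal (fun i => (r : ℂ) - (d i : ℂ)) := by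
      have hdiag : star U * A * U = Matrix.diagonal (fun i => (d i : ℂ)) := by
        simpa [Function.comp_def] using hH.conjStarAlgAut_star_eigenvectorUnitary
      rw [Matrix.star_eq_conjTranspose] at hdiag hsUU
      rw [Matrix.mul_sub, Matrix.sub_mul, hdiag, Matrix.mul_smul, Matrix.smul_mul,
        mul_one, hsUU, Matrix.smul_one_eq_diagonal, Matrix.diagonal_sub]
    rw [h2] at h1
    have h3 := Matrix.posSemidef_diagonal_iff.mp h1 i
    have h4 : (0:ℂ) ≤ ((r - d i : ℝ) : ℂ) := by push_cast; exact h3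
    have h5 : (0:ℝ) ≤ r - d i := by exact_mod_cast h4
    linarith
  -- the power
  have hpow : A ^ t = U * Matrix.diagonal (fun i => (d i : ℂ) ^ t) * star U := by
    rw [hspec, conj_pow hUU hsUU, Matrix.diagonal_pow]
    rfl
  have key : ((r ^ t : ℝ) : ℂ) • 1 - A ^ t
      = U * Matrix.diagonal (fun i => ((r ^ t - d i ^ t : ℝ) : ℂ)) * star U := by
    rw [hpow]
    have h1 : ((r ^ t : ℝ) : ℂ) • (1 : Matrix (Fin D) (Fin D) ℂ)
        = U * (((r ^ t : ℝ) : ℂ) • 1) * star U := by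
      rw [Matrix.mul_smul, Matrix.smul_mul, mul_one, hUU]
    rw [h1, ← Matrix.sub_mul, ← Matrix.mul_sub]
    congr 2
    rw [Matrix.smul_one_eq_diagonal, Matrix.diagonal_sub]
    congr 1
    funext i
    push_cast
    ring
  rw [key, Matrix.star_eq_conjTranspose]
  have hdnn : (0 : Fin D → ℂ) ≤ fun i => ((r ^ t - d i ^ t : ℝ) : ℂ) := by
    intro i
    have h6 : (0:ℝ) ≤ r ^ t - d i ^ t := sub_nonneg.mpr (pow_le_pow_left₀ (hnn i) (hle i) t)
    show (0:ℂ) ≤ ((r ^ t - d i ^ t : ℝ) : ℂ)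
    exact_mod_cast h6
  exact (Matrix.PosSemidef.diagonal hdnn).mul_mul_conjTranspose_same U


lemma proj_trace_rank {A : Matrix (Fin D) (Fin D) ℂ} (hA : A.IsHermitian) (h2 : A * A = A) :
    A.trace = (A.rank : ℂ) := by
  classical
  set U : Matrix (Fin D) (Fin D) ℂ := (hA.eigenvectorUnitary : Matrix (Fin D) (Fin D) ℂ) with hU
  set d := hA.eigenvalues with hd
  have hUU : U * star U = 1 := (Matrix.mem_unitaryGroup_iff).mp hA.eigenvectorUnitary.2
  have hsUU : star U * U = 1 := (Matrix.mem_unitaryGroup_iff').mp hA.eigenvectorUnitary.2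
  have hdiag : star U * A * U = Matrix.diagonal (fun i => (d i : ℂ)) := by
    simpa [Function.comp_def] using hA.conjStarAlgAut_star_eigenvectorUnitary
  have hDD : Matrix.diagonal (fun i => (d i : ℂ)) * Matrix.diagonal (fun i => (d i : ℂ))
      = Matrix.diagonal (fun i => (d i : ℂ)) := by
    rw [← hdiag]
    calc star U * A * U * (star U * A * U)
        = star U * (A * (U * star U) * A) * U := by noncomm_ring
      _ = star U * A * U := by rw [hUU, mul_one, h2]
  have hval : ∀ i, d i = 0 ∨ d i = 1 := by
    intro i
    have h3 := congrArg (fun M => M i i) hDD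
    simp only [Matrix.diagonal_mul_diagonal, Matrix.diagonal_apply_eq] at h3
    have h4 : d i * d i = d i := by exact_mod_cast h3
    have h5 : d i * (d i - 1) = 0 := by ring_nf; linarith [h4]
    rcases mul_eq_zero.mp h5 with h | h
    · exact Or.inl h
    · exact Or.inr (by linarith)
  have htr : A.trace = ∑ i, (d i : ℂ) := by
    have hspec : A = U * Matrix.diagonal (fun i => (d i : ℂ)) * star U := by
      simpa [Function.comp_def] using hA.spectral_theorem
    rw [hspec, Matrix.trace_mul_comm, ← mul_assoc, hsUU, one_mul, Matrix.trace_diagonal]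
  have hrank : A.rank = (Finset.univ.filter (fun i => d i ≠ 0)).card := by
    rw [hA.rank_eq_card_non_zero_eigs, Fintype.card_subtype]
  rw [htr, hrank]
  have : ∀ i, (d i : ℂ) = if d i ≠ 0 then 1 else 0 := by
    intro i
    rcases hval i with h | h <;> simp [h]
  rw [Finset.sum_congr rfl (fun i _ => this i), Finset.sum_boole]


variable {m : ℕ} (P : Fin m → Matrix (Fin D) (Fin D) ℂ)

lemma chainFwd_succ (t : ℕ) (i : Fin (t+1) → Fin m) :
    chainFwd P (t+1) i = (1 - P (i 0)) * chainFwd P t (i ∘ Fin.succ) := by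
  unfold chainFwd
  rw [List.finRange_succ]
  simp [List.map_map, Function.comp_def]

lemma chainRev_succ (t : ℕ) (i : Fin (t+1) → Fin m) :
    chainRev P (t+1) i = chainRev P t (i ∘ Fin.succ) * (1 - P (i 0)) := by
  unfold chainRev
  rw [List.finRange_succ]
  simp [List.map_map, Function.comp_def]

lemma commute_B (hcomm : ∀ i j, P i * P j = P j * P i) (j k : Fin m) :
    Commute ((1 : Matrix (Fin D) (Fin D) ℂ) - P j) (1 - P k) := by
  have h1 : Commute (P j) ((1 : Matrix (Fin D) (Fin D) ℂ) - P k) :=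
    (Commute.one_right (P j)).sub_right (hcomm j k)
  exact (Commute.one_left ((1 : Matrix (Fin D) (Fin D) ℂ) - P k)).sub_left h1

lemma commute_B_chainFwd (hcomm : ∀ i j, P i * P j = P j * P i) (j : Fin m)
    (t : ℕ) (i : Fin t → Fin m) :
    Commute ((1 : Matrix (Fin D) (Fin D) ℂ) - P j) (chainFwd P t i) := by
  apply Commute.list_prod_right
  intro x hx
  rw [List.mem_map] at hx
  obtain ⟨s, _, rfl⟩ := hx
  exact commute_B P hcomm j (i s)

lemma sum_chain (hidem : ∀ i, P i * P i = P i) (hcomm : ∀ i j, P i * P j = P j * P i) (t : ℕ) :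
    ∑ i : Fin t → Fin m, chainRev P t i * chainFwd P t i
      = (∑ j, ((1 : Matrix (Fin D) (Fin D) ℂ) - P j)) ^ t := by
  induction t with
  | zero => simp [chainRev, chainFwd]
  | succ t ih =>
    rw [← (Fin.consEquiv (fun _ : Fin (t+1) => Fin m)).sum_comp
      (fun i => chainRev P (t+1) i * chainFwd P (t+1) i), Fintype.sum_prod_type]
    have hterm : ∀ (j : Fin m) (i' : Fin t → Fin m),
        chainRev P (t+1) (Fin.cons j i') * chainFwd P (t+1) (Fin.cons j i')
          = chainRev P t i' * chainFwd P t i' * (1 - P j) := by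
      intro j i'
      have hcomp : (Fin.cons j i' : Fin (t+1) → Fin m) ∘ Fin.succ = i' :=
        funext fun s => by simp
      rw [chainRev_succ, chainFwd_succ, hcomp, Fin.cons_zero]
      have hBB : ((1 : Matrix (Fin D) (Fin D) ℂ) - P j) * (1 - P j) = 1 - P j := by
        rw [Matrix.sub_mul, one_mul, Matrix.mul_sub, mul_one, hidem j]
        abel
      have hc := commute_B_chainFwd P hcomm j t i'
      calc chainRev P t i' * (1 - P j) * ((1 - P j) * chainFwd P t i')
          = chainRev P t i' * (((1 - P j) * (1 - P j)) * chainFwd P t i') := by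
            noncomm_ring
        _ = chainRev P t i' * ((1 - P j) * chainFwd P t i') := by rw [hBB]
        _ = chainRev P t i' * (chainFwd P t i' * (1 - P j)) := by rw [hc.eq]
        _ = chainRev P t i' * chainFwd P t i' * (1 - P j) := by noncomm_ring
    calc ∑ j : Fin m, ∑ i' : Fin t → Fin m,
          chainRev P (t+1) ((Fin.consEquiv fun _ => Fin m) (j, i'))
            * chainFwd P (t+1) ((Fin.consEquiv fun _ => Fin m) (j, i'))
        = ∑ j : Fin m, ∑ i' : Fin t → Fin m,
            chainRev P t i' * chainFwd P t i' * (1 - P j) := by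
          refine Finset.sum_congr rfl fun j _ => Finset.sum_congr rfl fun i' _ => ?_
          exact hterm j i'
      _ = ∑ j : Fin m, (∑ i' : Fin t → Fin m, chainRev P t i' * chainFwd P t i') * (1 - P j) := by
          simp [Finset.sum_mul]
      _ = (∑ j, ((1 : Matrix (Fin D) (Fin D) ℂ) - P j)) ^ (t+1) := by
          rw [ih, ← Finset.mul_sum, pow_succ]


end HaltAux
end Helpers

section Main
open Matrix

/-- **Halting-measurement bound, commuting case.** -/
theorem halting_measurement_bound_commuting
    (D m : ℕ) (hD : 1 ≤ D) (hm : 1 ≤ m)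
    (P : Fin m → Matrix (Fin D) (Fin D) ℂ)
    (hherm : ∀ i, (P i).IsHermitian)
    (hidem : ∀ i, P i * P i = P i)
    (hcomm : ∀ i j, P i * P j = P j * P i)
    (a : Fin m) (T : ℕ) :
    (((1 : ℂ) / D) • P a - haltMat P a T).PosSemidef ∧
    (haltMat P a T).trace.re ≤ ((P a).rank : ℝ) / D := by
  classical
  have hmR : (0:ℝ) < (m:ℝ) := by exact_mod_cast hm
  have hm1 : (1:ℝ) ≤ (m:ℝ) := by exact_mod_cast hm
  have hDR : (0:ℝ) < (D:ℝ) := by exact_mod_cast hD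
  set A : Matrix (Fin D) (Fin D) ℂ := ∑ j, (1 - P j) with hA
  have hPaH : (P a)ᴴ = P a := hherm a
  have hBproj : ∀ j, ((1 : Matrix (Fin D) (Fin D) ℂ) - P j).PosSemidef := fun j =>
    HaltAux.proj_psd
      (by rw [Matrix.IsHermitian, Matrix.conjTranspose_sub, Matrix.conjTranspose_one, hherm j])
      (by rw [Matrix.sub_mul, one_mul, Matrix.mul_sub, mul_one, hidem j]; abel)
  have hApsd : A.PosSemidef := HaltAux.psd_sum _ _ (fun j _ => hBproj j)
  have hPaPsd : (P a).PosSemidef := HaltAux.proj_psd (hherm a) (hidem a)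
  have hPaA : Commute (P a) A := by
    rw [hA]
    exact Commute.sum_right _ _ _ (fun j _ =>
      (Commute.one_right (P a)).sub_right (hcomm a j))
  set Y : Matrix (Fin D) (Fin D) ℂ := P a * A * P a with hY
  have hYpsd : Y.PosSemidef := by
    have h := hApsd.conjTranspose_mul_mul_same (P a)
    rw [hPaH] at h
    rw [hY]
    exact h
  have hYalt : Y = A * P a := by
    rw [hY, hPaA.eq, mul_assoc, hidem a]
  have hYpowEq : ∀ t : ℕ, Y ^ (t+1) = A ^ (t+1) * P a := by
    intro t
    rw [hYalt, (hPaA.symm.mul_pow (t+1)),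
      (IsIdempotentElem.pow_succ_eq t (hidem a))]
  have hPaApowPa : ∀ t : ℕ, P a * A ^ (t+1) * P a = Y ^ (t+1) := by
    intro t
    rw [(hPaA.pow_right (t+1)).eq, mul_assoc, hidem a, hYpowEq]
  -- Y ≤ (m-1) • 1
  have hYsum : Y = ∑ j ∈ Finset.univ.erase a, P a * (1 - P j) * P a := by
    rw [hY, hA, Finset.mul_sum, Finset.sum_mul]
    refine (Finset.sum_erase _ ?_).symm
    rw [Matrix.mul_sub, mul_one, hidem a, sub_self, Matrix.zero_mul]
  have hsummand : ∀ j, (1 : Matrix (Fin D) (Fin D) ℂ) - P a * (1 - P j) * P a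
      = (1 - P a) + P a * P j * P a := by
    intro j
    rw [Matrix.mul_sub, mul_one, Matrix.sub_mul, hidem a]
    abel
  have hYle : ((((m:ℝ)-1 : ℝ) : ℂ) • 1 - Y).PosSemidef := by
    have hcard : (Finset.univ.erase a).card = m - 1 := by
      rw [Finset.card_erase_of_mem (Finset.mem_univ a), Finset.card_univ, Fintype.card_fin]
    have heq : (((m:ℝ)-1 : ℝ) : ℂ) • (1 : Matrix (Fin D) (Fin D) ℂ) - Y
        = ∑ j ∈ Finset.univ.erase a, ((1 : Matrix (Fin D) (Fin D) ℂ) - P a * (1 - P j) * P a) := by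
      rw [Finset.sum_sub_distrib, Finset.sum_const, hcard, hYsum]
      congr 1
      rw [← Nat.cast_smul_eq_nsmul ℂ (m-1) (1 : Matrix (Fin D) (Fin D) ℂ)]
      congr 1
      rw [Nat.cast_sub hm]
      push_cast
      ring
    rw [heq]
    refine HaltAux.psd_sum _ _ (fun j _ => ?_)
    rw [hsummand j]
    refine (hBproj a).add ?_
    have := (HaltAux.proj_psd (hherm j) (hidem j)).conjTranspose_mul_mul_same (P a)
    rwa [hPaH] at this
  have hYt : ∀ t : ℕ, (((((m:ℝ)-1)^(t+1) : ℝ) : ℂ) • P a - Y ^ (t+1)).PosSemidef := by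
    intro t
    have hpow := HaltAux.pow_le_smul_one (r := (m:ℝ)-1) (by linarith [hm1]) hYpsd hYle (t+1)
    have hconj := hpow.conjTranspose_mul_mul_same (P a)
    rw [hPaH] at hconj
    have heq : P a * (((((m:ℝ)-1)^(t+1) : ℝ) : ℂ) • 1 - Y ^ (t+1)) * P a
        = ((((m:ℝ)-1)^(t+1) : ℝ) : ℂ) • P a - Y ^ (t+1) := by
      rw [Matrix.mul_sub, Matrix.sub_mul, Matrix.mul_smul, Matrix.smul_mul, mul_one, hidem a]
      congr 1
      rw [hYpowEq t]
      calc P a * (A ^ (t+1) * P a) * P a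
          = (P a * A ^ (t+1)) * (P a * P a) := by noncomm_ring
        _ = A ^ (t+1) * P a * P a := by rw [hidem a, (hPaA.pow_right (t+1)).eq]
        _ = A ^ (t+1) * (P a * P a) := by rw [mul_assoc]
        _ = A ^ (t+1) * P a := by rw [hidem a]
    rwa [heq] at hconj
  -- rewrite haltMat
  set N : ℕ → Matrix (Fin D) (Fin D) ℂ :=
    fun t => ((1:ℂ)/(m:ℂ)^(t+1)) • (P a * A ^ t * P a) with hN
  have hinner : ∀ t : ℕ, ∑ i : Fin t → Fin m,
      P a * chainRev P t i * (((1 : ℂ) / D) • 1) * chainFwd P t i * P a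
        = ((1:ℂ)/(D:ℂ)) • (P a * A ^ t * P a) := by
    intro t
    have h1 : ∀ i : Fin t → Fin m,
        P a * chainRev P t i * (((1 : ℂ) / D) • 1) * chainFwd P t i * P a
          = ((1:ℂ)/(D:ℂ)) • (P a * (chainRev P t i * chainFwd P t i) * P a) := by
      intro i
      simp only [Matrix.mul_smul, Matrix.smul_mul, mul_one]
      congr 1
      noncomm_ring
    rw [Finset.sum_congr rfl (fun i _ => h1 i), ← Finset.smul_sum]
    congr 1
    rw [← Finset.sum_mul, ← Finset.mul_sum, HaltAux.sum_chain P hidem hcomm t, hA]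
  have hHalt : haltMat P a T = ((1:ℂ)/(D:ℂ)) • ∑ t ∈ Finset.range (T + 1), N t := by
    unfold haltMat
    rw [Finset.sum_congr rfl (fun t _ => by rw [hinner t])]
    rw [Finset.smul_sum, Finset.smul_sum]
    refine Finset.sum_congr rfl (fun t _ => ?_)
    rw [hN]
    simp only [smul_smul]
    congr 1
    rw [pow_succ]
    ring
  -- E is PSD
  set ρ : ℕ → ℝ := fun t => ((m:ℝ)-1)^t / (m:ℝ)^(t+1) with hρ
  have hρnn : ∀ t, 0 ≤ ρ t := fun t => by
    rw [hρ]
    exact div_nonneg (pow_nonneg (by linarith [hm1]) t) (pow_nonneg hmR.le (t+1))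
  have hterm : ∀ t : ℕ, ((ρ t : ℂ) • P a - N t).PosSemidef := by
    intro t
    match t with
    | 0 =>
      have : ((ρ 0 : ℂ) • P a - N 0) = 0 := by
        rw [hρ, hN]
        simp only [pow_zero, pow_one, mul_one, hidem a]
        rw [sub_eq_zero]
        congr 1
        push_cast
        norm_num
      rw [this]
      exact Matrix.PosSemidef.zero
    | (t+1) =>
      have hNt : N (t+1) = ((1/(m:ℝ)^(t+2) : ℝ) : ℂ) • Y ^ (t+1) := by
        rw [hN]
        simp only
        rw [hPaApowPa t]
        congr 1
        push_cast
        norm_num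
      have hscal : (ρ (t+1) : ℂ) = ((1/(m:ℝ)^(t+2) : ℝ) : ℂ) * ((((m:ℝ)-1)^(t+1) : ℝ) : ℂ) := by
        rw [hρ]
        push_cast
        field_simp
      have heq : (ρ (t+1) : ℂ) • P a - N (t+1)
          = ((1/(m:ℝ)^(t+2) : ℝ) : ℂ) • (((((m:ℝ)-1)^(t+1) : ℝ) : ℂ) • P a - Y ^ (t+1)) := by
        rw [smul_sub, smul_smul, hNt, hscal]
      rw [heq]
      exact HaltAux.psd_smul (hYt t) (one_div_nonneg.mpr (pow_nonneg hmR.le (t+2)))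
  have hgeom : ∀ n : ℕ, ∑ t ∈ Finset.range n, ρ t = 1 - (((m:ℝ)-1)/(m:ℝ))^n := by
    intro n
    induction n with
    | zero => simp
    | succ n ih =>
      rw [Finset.sum_range_succ, ih, hρ]
      simp only
      rw [div_pow, div_pow]
      field_simp
      ring
  have hρsum : ∑ t ∈ Finset.range (T+1), ρ t ≤ 1 := by
    rw [hgeom]
    have h1 : (0:ℝ) ≤ (((m:ℝ)-1)/(m:ℝ))^(T+1) :=
      pow_nonneg (div_nonneg (by linarith [hm1]) hmR.le) (T+1)
    linarith
  have hEpsd : (P a - ∑ t ∈ Finset.range (T+1), N t).PosSemidef := by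
    have hE : P a - ∑ t ∈ Finset.range (T+1), N t
        = (((1 - ∑ t ∈ Finset.range (T+1), ρ t : ℝ)) : ℂ) • P a
          + ∑ t ∈ Finset.range (T+1), ((ρ t : ℂ) • P a - N t) := by
      rw [Finset.sum_sub_distrib, ← Finset.sum_smul]
      have hcast : (∑ t ∈ Finset.range (T+1), (ρ t : ℂ))
          = (((∑ t ∈ Finset.range (T+1), ρ t : ℝ)) : ℂ) := by
        push_cast
        rfl
      rw [hcast, ← add_sub_assoc, ← add_smul]
      have hone : (((1 - ∑ t ∈ Finset.range (T+1), ρ t : ℝ)) : ℂ)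
          + (((∑ t ∈ Finset.range (T+1), ρ t : ℝ)) : ℂ) = 1 := by
        push_cast
        ring
      rw [hone, one_smul]
    rw [hE]
    exact (HaltAux.psd_smul hPaPsd (by linarith [hρsum])).add
      (HaltAux.psd_sum _ _ (fun t _ => hterm t))
  have hmain : (((1 : ℂ) / D) • P a - haltMat P a T).PosSemidef := by
    rw [hHalt, ← smul_sub]
    have hc : ((1:ℂ)/(D:ℂ)) = (((1/(D:ℝ)) : ℝ) : ℂ) := by push_cast; ring
    rw [hc]
    exact HaltAux.psd_smul hEpsd (by positivity)
  refine ⟨hmain, ?_⟩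
  -- trace bound
  have htr0 := HaltAux.psd_trace_re_nonneg hmain
  have htrPa : (P a).trace = ((P a).rank : ℂ) := HaltAux.proj_trace_rank (hherm a) (hidem a)
  have hsub : (((1 : ℂ) / D) • P a - haltMat P a T).trace
      = ((1:ℂ)/(D:ℂ)) * (P a).trace - (haltMat P a T).trace := by
    rw [Matrix.trace_sub, Matrix.trace_smul]
    rfl
  rw [hsub] at htr0
  have hre : (((1:ℂ)/(D:ℂ)) * (P a).trace).re = (1/(D:ℝ)) * ((P a).rank : ℝ) := by
    rw [htrPa]
    have : ((1:ℂ)/(D:ℂ)) * ((P a).rank : ℂ) = (((1/(D:ℝ)) * ((P a).rank : ℝ) : ℝ) : ℂ) := by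
      push_cast
      ring
    rw [this, Complex.ofReal_re]
  rw [Complex.sub_re, hre] at htr0
  have : (1/(D:ℝ)) * ((P a).rank : ℝ) = ((P a).rank : ℝ) / D := by ring
  linarith [htr0]

end Main
end

section
/- (Suppression of continuation terms, commuting case.) Let Π₁, …, Π_m be mutually commuting projectors on ℂ^D, let S ⊆ {1,…,m} with |S| = k ≥ 1, and let P = ∏_{i∈S} Πᵢ. Define the linear map M_cont on matrices by M_cont(ρ) = (1/m) Σ_{i=1}^{m} (I−Πᵢ) ρ (I−Πᵢ). Then for every integer t ≥ 0, P · M_cont^t(I/D) · P ≤ ((m−k)/m)ᵗ · (1/D) P in the Loewner order. -/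
open scoped ComplexOrder
open Matrix

/-- The continuation map `M_cont(ρ) = (1/m) Σᵢ (I−Πᵢ) ρ (I−Πᵢ)`. -/
noncomputable def Mcont {D m : ℕ} (P : Fin m → Matrix (Fin D) (Fin D) ℂ)
    (ρ : Matrix (Fin D) (Fin D) ℂ) : Matrix (Fin D) (Fin D) ℂ :=
  ((1 : ℂ) / m) • ∑ i, (1 - P i) * ρ * (1 - P i)

section Aux

variable {D : ℕ}

lemma psd_smul_real {M : Matrix (Fin D) (Fin D) ℂ} (hM : M.PosSemidef)
    {r : ℝ} (hr : 0 ≤ r) : ((r : ℂ) • M).PosSemidef := by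
  constructor
  · unfold Matrix.IsHermitian
    rw [Matrix.conjTranspose_smul, hM.1.eq]
    simp [Complex.conj_ofReal]
  · intro x
    exact (hM.smul (by exact_mod_cast Complex.zero_le_real.2 hr : (0:ℂ) ≤ (r:ℂ))).2 x

lemma psd_of_proj {M : Matrix (Fin D) (Fin D) ℂ} (hh : M.IsHermitian)
    (hi : M * M = M) : M.PosSemidef := by
  have := Matrix.posSemidef_conjTranspose_mul_self M
  rwa [hh.eq, hi] at this

lemma one_sub_proj_idem {Q : Matrix (Fin D) (Fin D) ℂ} (h : Q * Q = Q) :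
    (1 - Q) * (1 - Q) = 1 - Q := by
  simp only [mul_sub, sub_mul, one_mul, mul_one, h]
  abel

variable {m : ℕ} (P : Fin m → Matrix (Fin D) (Fin D) ℂ)
  (hherm : ∀ i, (P i).IsHermitian)
  (hidem : ∀ i, P i * P i = P i)
  (hcomm : ∀ i j, Commute (P i) (P j))

lemma noncommProd_comm (S : Finset (Fin m)) (j : Fin m) :
    Commute (P j) (S.noncommProd P (fun a _ b _ _ => hcomm a b)) :=
  Finset.noncommProd_commute _ _ _ _ (fun i _ => hcomm j i)

include hherm hcomm in
lemma noncommProd_herm (S : Finset (Fin m)) :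
    (S.noncommProd P (fun a _ b _ _ => hcomm a b)).IsHermitian := by
  induction S using Finset.induction_on with
  | empty => rw [Finset.noncommProd_empty P (fun x _ y _ _ => hcomm x y)]; exact Matrix.isHermitian_one
  | insert a s ha ih =>
    rw [Finset.noncommProd_insert_of_notMem s a P (fun x _ y _ _ => hcomm x y) ha]
    unfold Matrix.IsHermitian
    rw [Matrix.conjTranspose_mul, ih, (hherm a).eq,
      ((noncommProd_comm P hcomm s a).symm).eq]

include hidem hcomm in
lemma noncommProd_idem (S : Finset (Fin m)) :
    (S.noncommProd P (fun a _ b _ _ => hcomm a b)) *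
      (S.noncommProd P (fun a _ b _ _ => hcomm a b)) =
      S.noncommProd P (fun a _ b _ _ => hcomm a b) := by
  induction S using Finset.induction_on with
  | empty => rw [Finset.noncommProd_empty P (fun x _ y _ _ => hcomm x y)]; simp
  | insert a s ha ih =>
    rw [Finset.noncommProd_insert_of_notMem s a P (fun x _ y _ _ => hcomm x y) ha]
    set Q := s.noncommProd P (fun a _ b _ _ => hcomm a b) with hQ
    have hc : Commute (P a) Q := noncommProd_comm P hcomm s a
    calc P a * Q * (P a * Q) = P a * (Q * P a) * Q := by
          simp only [mul_assoc]
      _ = P a * (P a * Q) * Q := by rw [hc.eq]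
      _ = (P a * P a) * (Q * Q) := by simp only [mul_assoc]
      _ = P a * Q := by rw [hidem a, ih]

include hidem hcomm in
lemma noncommProd_absorb (S : Finset (Fin m)) {i : Fin m} (hi : i ∈ S) :
    (S.noncommProd P (fun a _ b _ _ => hcomm a b)) * P i =
      S.noncommProd P (fun a _ b _ _ => hcomm a b) := by
  induction S using Finset.induction_on with
  | empty => simp at hi
  | insert a s ha ih =>
    rw [Finset.noncommProd_insert_of_notMem s a P (fun x _ y _ _ => hcomm x y) ha]
    set Q := s.noncommProd P (fun a _ b _ _ => hcomm a b) with hQ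
    rcases Finset.mem_insert.mp hi with h | h
    · subst h
      have hc : Commute (P i) Q := noncommProd_comm P hcomm s i
      calc P i * Q * P i = P i * (Q * P i) := by rw [mul_assoc]
        _ = P i * (P i * Q) := by rw [hc.eq]
        _ = (P i * P i) * Q := by rw [mul_assoc]
        _ = P i * Q := by rw [hidem i]
    · rw [mul_assoc, ih h]

end Aux

/-- **Suppression of continuation terms, commuting case.**
`P M_contᵗ(I/D) P ≤ ((m−k)/m)ᵗ (1/D) P`, where `P = ∏_{i∈S} Πᵢ`. -/
theorem suppression_of_continuation_terms
    (D m : ℕ)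
    (P : Fin m → Matrix (Fin D) (Fin D) ℂ)
    (hherm : ∀ i, (P i).IsHermitian)
    (hidem : ∀ i, P i * P i = P i)
    (hcomm : ∀ i j, Commute (P i) (P j))
    (S : Finset (Fin m)) (k : ℕ) (hk : S.card = k) (hk1 : 1 ≤ k)
    (t : ℕ) :
    let Pm := S.noncommProd P (fun a _ b _ _ => hcomm a b)
    (((((((m : ℝ) - k) / m) ^ t / D : ℝ)) : ℂ) • Pm
      - Pm * ((Mcont P)^[t] (((1 : ℂ) / D) • 1)) * Pm).PosSemidef := by
  intro Pm
  classical
  have hkm : k ≤ m := by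
    rw [← hk]
    simpa using S.card_le_univ
  have hm : 0 < m := lt_of_lt_of_le hk1 hkm
  have hmne : (m : ℂ) ≠ 0 := Nat.cast_ne_zero.2 hm.ne'
  set c : ℝ := ((m : ℝ) - k) / m with hc
  have hc0 : 0 ≤ c := div_nonneg (sub_nonneg.2 (by exact_mod_cast hkm)) (Nat.cast_nonneg m)
  have hPmh : Pm.IsHermitian := noncommProd_herm P hherm hcomm S
  have hPmi : Pm * Pm = Pm := noncommProd_idem P hidem hcomm S
  have hPc : ∀ i, Commute (P i) Pm := noncommProd_comm P hcomm S
  have habs : ∀ i ∈ S, Pm * P i = Pm := fun i hi => noncommProd_absorb P hidem hcomm S hi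
  -- Pm * P i is PSD
  have hPmPi : ∀ i, (Pm * P i).PosSemidef := by
    intro i
    apply psd_of_proj
    · unfold Matrix.IsHermitian
      rw [Matrix.conjTranspose_mul, hPmh.eq, (hherm i).eq, (hPc i).eq]
    · calc Pm * P i * (Pm * P i) = Pm * (P i * Pm) * P i := by simp only [mul_assoc]
        _ = Pm * (Pm * P i) * P i := by rw [(hPc i).eq]
        _ = (Pm * Pm) * (P i * P i) := by simp only [mul_assoc]
        _ = Pm * P i := by rw [hPmi, hidem i]
  induction t with
  | zero =>
    have : ((((c : ℝ) ^ 0 / D : ℝ)) : ℂ) • Pm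
        - Pm * ((Mcont P)^[0] (((1 : ℂ) / D) • 1)) * Pm = 0 := by
      rw [Function.iterate_zero_apply, pow_zero]
      rw [Matrix.mul_smul, Matrix.smul_mul, mul_one, hPmi]
      push_cast
      rw [sub_self]
    rw [this]
    exact Matrix.PosSemidef.zero
  | succ t ih =>
    set ρ : Matrix (Fin D) (Fin D) ℂ := (Mcont P)^[t] (((1 : ℂ) / D) • 1) with hρ
    set X : Matrix (Fin D) (Fin D) ℂ := Pm * ρ * Pm with hX
    set s : ℂ := (((c : ℝ) ^ t / D : ℝ) : ℂ) with hs
    -- vanishing on S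
    have hzero : ∀ i ∈ S, Pm * (1 - P i) = 0 := by
      intro i hi
      rw [mul_sub, mul_one, habs i hi, sub_self]
    -- per-term rewriting for i ∉ S
    have hterm : ∀ i ∈ Sᶜ, Pm * ((1 - P i) * ρ * (1 - P i)) * Pm
        = (1 - P i) * X * (1 - P i) := by
      intro i _
      have hcq : Commute Pm (1 - P i) := (Commute.one_right Pm).sub_right (hPc i).symm
      rw [hX]
      simp only [mul_assoc]
      rw [← hcq.eq, ← mul_assoc Pm (1 - P i), hcq.eq]
      simp only [mul_assoc]
    -- splitting the sum
    have hsplit : Pm * Mcont P ρ * Pm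
        = ((1 : ℂ) / m) • ∑ i ∈ Sᶜ, (1 - P i) * X * (1 - P i) := by
      rw [Mcont, Matrix.mul_smul, Matrix.smul_mul]
      congr 1
      rw [Finset.mul_sum, Finset.sum_mul, ← Finset.sum_add_sum_compl S]
      have h1 : ∑ i ∈ S, Pm * ((1 - P i) * ρ * (1 - P i)) * Pm = 0 := by
        apply Finset.sum_eq_zero
        intro i hi
        simp only [← mul_assoc]
        rw [hzero i hi]
        simp
      rw [h1, zero_add]
      exact Finset.sum_congr rfl hterm
    -- scalar identity
    have hcard : (Sᶜ : Finset (Fin m)).card = m - k := by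
      rw [Finset.card_compl, hk, Fintype.card_fin]
    have hscal : ((((c : ℝ) ^ (t + 1) / D : ℝ)) : ℂ)
        = ((1 : ℂ) / m) * ((m - k : ℕ) : ℂ) * s := by
      rw [hs, hc, Nat.cast_sub hkm]
      push_cast
      rw [pow_succ']
      ring
    -- per-term positivity
    have key : ∀ i ∈ Sᶜ, (s • Pm - (1 - P i) * X * (1 - P i)).PosSemidef := by
      intro i hi
      have hcq : Commute Pm (1 - P i) := (Commute.one_right Pm).sub_right (hPc i).symm
      have hQPQ : (1 - P i) * Pm * (1 - P i) = Pm - Pm * P i := by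
        rw [← hcq.eq, mul_assoc, one_sub_proj_idem (hidem i), mul_sub, mul_one]
      have h1 : (s • (Pm * P i)).PosSemidef :=
        psd_smul_real (hPmPi i) (by positivity)
      have h2 : ((1 - P i) * (s • Pm - X) * (1 - P i)).PosSemidef := by
        have hherm' : (1 - P i)ᴴ = 1 - P i := by
          rw [Matrix.conjTranspose_sub, Matrix.conjTranspose_one, (hherm i).eq]
        have := ih.mul_mul_conjTranspose_same (1 - P i)
        rwa [hherm'] at this
      have hexp : (1 - P i) * (s • Pm - X) * (1 - P i)
          = s • (Pm - Pm * P i) - (1 - P i) * X * (1 - P i) := by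
        rw [mul_sub ((1 : Matrix (Fin D) (Fin D) ℂ) - P i) (s • Pm) X, sub_mul,
          Matrix.mul_smul, Matrix.smul_mul, hQPQ]
      have heq : s • Pm - (1 - P i) * X * (1 - P i)
          = s • (Pm * P i) + (1 - P i) * (s • Pm - X) * (1 - P i) := by
        rw [hexp, smul_sub]
        abel
      rw [heq]
      exact h1.add h2
    -- assemble
    have hgoal : ((((c : ℝ) ^ (t + 1) / D : ℝ)) : ℂ) • Pm
        - Pm * ((Mcont P)^[t + 1] (((1 : ℂ) / D) • 1)) * Pm
        = ((1 : ℂ) / m) • ∑ i ∈ Sᶜ, (s • Pm - (1 - P i) * X * (1 - P i)) := by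
      rw [Function.iterate_succ_apply', ← hρ, hsplit, Finset.sum_sub_distrib, smul_sub]
      congr 1
      rw [Finset.sum_const, hcard, ← Nat.cast_smul_eq_nsmul ℂ, smul_smul, smul_smul, hscal]
    rw [hgoal]
    have : ((1 : ℂ) / m) = (((1 / m : ℝ)) : ℂ) := by push_cast; ring
    rw [this]
    apply psd_smul_real _ (by positivity)
    exact Finset.sum_induction _ _ (fun a b ha hb => ha.add hb) Matrix.PosSemidef.zero key
end

section
/- (CP-map identity (i).) Let Π₁, …, Π_m be mutually commuting projectors on ℂ^D, let S ⊆ {1,…,m} with |S| = k ≥ 1, and let P = ∏_{i∈S} Πᵢ. Define M_cont(ρ) = (1/m) Σ_{i=1}^{m} (I−Πᵢ) ρ (I−Πᵢ). Then for every integer T ≥ 0, (1/m) · Σ_{t=0}^{T} P · M_cont^t(I/D) · P ≤ (1/k) · (1/D) P in the Loewner order. -/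
open scoped ComplexOrder

namespace CPAux

open Matrix

variable {n : ℕ}

lemma proj_psd {M : Matrix (Fin n) (Fin n) ℂ} (hh : M.IsHermitian) (hi : M * M = M) :
    M.PosSemidef := by
  have h : Mᴴ * M = M := by rw [hh.eq]; exact hi
  exact h ▸ Matrix.posSemidef_conjTranspose_mul_self M

lemma sum_psd {ι : Type*} (s : Finset ι) (f : ι → Matrix (Fin n) (Fin n) ℂ)
    (h : ∀ i ∈ s, (f i).PosSemidef) : (∑ i ∈ s, f i).PosSemidef := by
  classical
  induction s using Finset.induction_on with
  | empty => simpa using Matrix.PosSemidef.zero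
  | insert _ _ ha ih =>
    rw [Finset.sum_insert ha]
    exact (h _ (Finset.mem_insert_self _ _)).add
      (ih fun i hi => h i (Finset.mem_insert_of_mem hi))

lemma smul_psd {M : Matrix (Fin n) (Fin n) ℂ} (r : ℝ) (hr : 0 ≤ r) (hM : M.PosSemidef) :
    ((r : ℂ) • M).PosSemidef := by
  refine Matrix.PosSemidef.of_dotProduct_mulVec_nonneg ?_ ?_
  · unfold Matrix.IsHermitian
    rw [Matrix.conjTranspose_smul, hM.1.eq]
    congr 1
    simp
  · intro x
    rw [Matrix.smul_mulVec, dotProduct_smul]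
    have h0 : (0 : ℂ) ≤ (r : ℂ) := by exact_mod_cast Complex.zero_le_real.2 hr
    exact mul_nonneg h0 (hM.dotProduct_mulVec_nonneg x)

lemma conj_pow (U X : Matrix (Fin n) (Fin n) ℂ) (h1 : U * star U = 1) (h2 : star U * U = 1)
    (t : ℕ) : (U * X * star U) ^ t = U * X ^ t * star U := by
  induction t with
  | zero => simp [h1]
  | succ t ih =>
    rw [pow_succ, ih, pow_succ]
    simp only [mul_assoc]
    rw [show star U * (U * (X * star U)) = X * star U from by
      rw [← mul_assoc, h2, one_mul], ← mul_assoc (X ^ t) X, ← pow_succ]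

section np
variable {D m : ℕ} (P : Fin m → Matrix (Fin D) (Fin D) ℂ)

lemma np_herm (hherm : ∀ i, (P i).IsHermitian) (hcomm : ∀ i j, Commute (P i) (P j))
    (s : Finset (Fin m)) (h) : (s.noncommProd P h).IsHermitian := by
  classical
  induction s using Finset.induction_on with
  | empty => rw [Finset.noncommProd_empty]; exact Matrix.isHermitian_one
  | @insert a s ha ih =>
    rw [Finset.noncommProd_insert_of_notMem _ _ _ _ ha]
    have hc : Commute (P a) (s.noncommProd P (fun x _ y _ _ => hcomm x y)) :=
      Finset.noncommProd_commute _ _ _ _ (fun x _ => hcomm a x)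
    show _ᴴ = _
    rw [Matrix.conjTranspose_mul, (ih _).eq, (hherm a).eq, hc.eq]

lemma np_idem (hidem : ∀ i, P i * P i = P i) (hcomm : ∀ i j, Commute (P i) (P j))
    (s : Finset (Fin m)) (h) :
    s.noncommProd P h * s.noncommProd P h = s.noncommProd P h := by
  classical
  induction s using Finset.induction_on with
  | empty => rw [Finset.noncommProd_empty]; simp
  | @insert a s ha ih =>
    rw [Finset.noncommProd_insert_of_notMem _ _ _ _ ha]
    have hc : Commute (P a) (s.noncommProd P (fun x _ y _ _ => hcomm x y)) :=
      Finset.noncommProd_commute _ _ _ _ (fun x _ => hcomm a x)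
    set Q := s.noncommProd P (fun x _ y _ _ => hcomm x y) with hQ
    show P a * Q * (P a * Q) = P a * Q
    calc P a * Q * (P a * Q)
        = P a * (Q * P a) * Q := by simp only [mul_assoc]
      _ = P a * P a * (Q * Q) := by rw [← hc.eq]; simp only [mul_assoc]
      _ = P a * Q := by rw [hidem a, hQ]; exact congrArg _ (ih _)

lemma np_absorb (hidem : ∀ i, P i * P i = P i) (hcomm : ∀ i j, Commute (P i) (P j))
    (s : Finset (Fin m)) (h) (i : Fin m) (hi : i ∈ s) :
    P i * s.noncommProd P h = s.noncommProd P h := by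
  classical
  induction s using Finset.induction_on with
  | empty => exact absurd hi (Finset.notMem_empty i)
  | @insert a s ha ih =>
    rw [Finset.noncommProd_insert_of_notMem _ _ _ _ ha]
    rcases Finset.mem_insert.mp hi with rfl | hi'
    · rw [← mul_assoc, hidem i]
    · rw [← mul_assoc, (hcomm i a).eq, mul_assoc, ih (fun x _ y _ _ => hcomm x y) hi']

lemma one_sub_idem (hidem : ∀ i, P i * P i = P i) (i : Fin m) :
    ((1 : Matrix (Fin D) (Fin D) ℂ) - P i) * (1 - P i) = 1 - P i := by
  rw [sub_mul, one_mul, mul_sub, mul_one, hidem i, sub_self, sub_zero]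

lemma comm_one_sub (hcomm : ∀ i j, Commute (P i) (P j)) (i j : Fin m) :
    Commute ((1 : Matrix (Fin D) (Fin D) ℂ) - P i) (1 - P j) :=
  (Commute.one_left _).sub_left ((Commute.one_right (P i)).sub_right (hcomm i j))

lemma comm_A (hcomm : ∀ i j, Commute (P i) (P j)) (i : Fin m) :
    Commute ((1 : Matrix (Fin D) (Fin D) ℂ) - P i)
      (((1 : ℂ) / m) • ∑ j, ((1 : Matrix (Fin D) (Fin D) ℂ) - P j)) :=
  Commute.smul_right (Commute.sum_right _ _ _ fun j _ => comm_one_sub P hcomm i j) _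

lemma iter_eq (hidem : ∀ i, P i * P i = P i) (hcomm : ∀ i j, Commute (P i) (P j)) (t : ℕ) :
    (Mcont P)^[t] (((1 : ℂ) / D) • 1)
      = ((1 : ℂ) / D) • (((1 : ℂ) / m) • ∑ j, ((1 : Matrix (Fin D) (Fin D) ℂ) - P j)) ^ t := by
  set A := ((1 : ℂ) / m) • ∑ j, ((1 : Matrix (Fin D) (Fin D) ℂ) - P j) with hA
  induction t with
  | zero => simp
  | succ t ih =>
    rw [Function.iterate_succ_apply', ih]
    have hterm : ∀ i : Fin m, (1 - P i) * (((1 : ℂ) / D) • A ^ t) * (1 - P i)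
        = ((1 : ℂ) / D) • ((1 - P i) * A ^ t) := by
      intro i
      have hc := (comm_A P hcomm i).pow_right t
      rw [mul_smul_comm, smul_mul_assoc]
      congr 1
      rw [mul_assoc, ← hc.eq, ← mul_assoc, one_sub_idem P hidem i]
    show ((1 : ℂ) / m) • ∑ i, (1 - P i) * (((1 : ℂ) / D) • A ^ t) * (1 - P i) = _
    rw [Finset.sum_congr rfl fun i _ => hterm i, ← Finset.smul_sum, ← Finset.sum_mul]
    rw [smul_comm, ← smul_mul_assoc, ← hA, ← pow_succ']

lemma pow_mul_Q (hidem : ∀ i, P i * P i = P i) (hcomm : ∀ i j, Commute (P i) (P j))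
    (S : Finset (Fin m)) (t : ℕ) :
    (((1 : ℂ) / m) • ∑ j, ((1 : Matrix (Fin D) (Fin D) ℂ) - P j)) ^ t
        * S.noncommProd P (fun a _ b _ _ => hcomm a b)
      = (((1 : ℂ) / m) • ∑ j ∈ Sᶜ, ((1 : Matrix (Fin D) (Fin D) ℂ) - P j)) ^ t
        * S.noncommProd P (fun a _ b _ _ => hcomm a b) := by
  set A := ((1 : ℂ) / m) • ∑ j, ((1 : Matrix (Fin D) (Fin D) ℂ) - P j) with hA
  set B := ((1 : ℂ) / m) • ∑ j ∈ Sᶜ, ((1 : Matrix (Fin D) (Fin D) ℂ) - P j) with hB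
  set Q := S.noncommProd P (fun a _ b _ _ => hcomm a b) with hQ
  have hPQ : ∀ i ∈ S, P i * Q = Q := fun i hi => np_absorb P hidem hcomm S _ i hi
  have hQP : ∀ j, Commute (P j) Q := fun j =>
    Finset.noncommProd_commute _ _ _ _ fun x _ => hcomm j x
  have hQB : Commute Q B := by
    apply Commute.smul_right
    exact Commute.sum_right _ _ _ fun j _ =>
      (Commute.one_right Q).sub_right (hQP j).symm
  have hAQ : A * Q = B * Q := by
    have hsplit : A - B = ((1 : ℂ) / m) • ∑ j ∈ S, ((1 : Matrix (Fin D) (Fin D) ℂ) - P j) := by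
      rw [hA, hB, ← smul_sub]
      congr 1
      rw [← Finset.sum_add_sum_compl S fun j => ((1 : Matrix (Fin D) (Fin D) ℂ) - P j)]
      abel
    have hz : (A - B) * Q = 0 := by
      rw [hsplit, smul_mul_assoc, Finset.sum_mul]
      have : ∀ j ∈ S, ((1 : Matrix (Fin D) (Fin D) ℂ) - P j) * Q = 0 := by
        intro j hj
        rw [sub_mul, one_mul, hPQ j hj, sub_self]
      rw [Finset.sum_congr rfl this]; simp
    have hz2 : A * Q - B * Q = 0 := by rw [← sub_mul]; exact hz
    exact sub_eq_zero.mp hz2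
  induction t with
  | zero => simp
  | succ t ih =>
    rw [pow_succ', pow_succ', mul_assoc, ih, mul_assoc, (hQB.pow_right t).symm.eq,
      ← mul_assoc, ← mul_assoc, hAQ]

end np

lemma key_real (k m D T : ℕ) (hk1 : 1 ≤ k) (hkm : k ≤ m) (lam : ℝ) (h0 : 0 ≤ lam)
    (hup : lam ≤ ((m : ℝ) - k) / m) :
    0 ≤ 1 / ((k : ℝ) * D) - 1 / ((m : ℝ) * D) * ∑ t ∈ Finset.range (T + 1), lam ^ t := by
  have hm : (0 : ℝ) < m := by
    have : (1 : ℕ) ≤ m := le_trans hk1 hkm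
    exact_mod_cast Nat.lt_of_lt_of_le Nat.zero_lt_one this
  have hkR : (0 : ℝ) < k := by exact_mod_cast hk1
  set s := ∑ t ∈ Finset.range (T + 1), lam ^ t with hs
  have hs0 : 0 ≤ s := Finset.sum_nonneg fun t _ => pow_nonneg h0 t
  have hgeom := geom_sum_mul lam (T + 1)
  have hlp : 0 ≤ lam ^ (T + 1) := pow_nonneg h0 _
  have h2 : s * (1 - lam) ≤ 1 := by nlinarith [hgeom]
  have h1 : (k : ℝ) ≤ (1 - lam) * m := by
    have hc := div_mul_cancel₀ ((m : ℝ) - k) (ne_of_gt hm)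
    nlinarith [mul_le_mul_of_nonneg_right hup hm.le]
  have hks : (k : ℝ) * s ≤ m := by nlinarith [mul_le_mul_of_nonneg_right h1 hs0]
  rcases Nat.eq_zero_or_pos D with hD | hD
  · simp [hD]
  · have hD' : (0 : ℝ) < D := by exact_mod_cast hD
    have e1 : 1 / ((m : ℝ) * D) * s = s / ((m : ℝ) * D) := by ring
    rw [sub_nonneg, e1, div_le_div_iff₀ (by positivity) (by positivity)]
    nlinarith [mul_le_mul_of_nonneg_right hks hD'.le]

lemma W_psd (B : Matrix (Fin n) (Fin n) ℂ) (hBpsd : B.PosSemidef)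
    (c : ℝ) (hC : (((c : ℝ) : ℂ) • 1 - B).PosSemidef)
    (c₁ c₂ : ℝ) (T : ℕ)
    (hw : ∀ lam : ℝ, 0 ≤ lam → lam ≤ c →
      0 ≤ c₁ - c₂ * ∑ t ∈ Finset.range (T + 1), lam ^ t) :
    (((c₁ : ℝ) : ℂ) • 1
      - ((c₂ : ℝ) : ℂ) • ∑ t ∈ Finset.range (T + 1), B ^ t).PosSemidef := by
  classical
  have hB : B.IsHermitian := hBpsd.1
  set lam := hB.eigenvalues with hlam
  set U : Matrix (Fin n) (Fin n) ℂ := (hB.eigenvectorUnitary : Matrix (Fin n) (Fin n) ℂ)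
    with hUdef
  have hmem := hB.eigenvectorUnitary.2
  have hU2 : star U * U = 1 := hmem.1
  have hU1 : U * star U = 1 := hmem.2
  set d : Fin n → ℂ := RCLike.ofReal ∘ lam with hd
  have hspec : B = U * Matrix.diagonal d * star U := hB.spectral_theorem
  have hBpow : ∀ t : ℕ, B ^ t = U * (Matrix.diagonal d) ^ t * star U := by
    intro t
    rw [hspec]
    exact conj_pow U _ hU1 hU2 t
  have h0 : ∀ i, 0 ≤ lam i := hBpsd.eigenvalues_nonneg
  have hup : ∀ i, lam i ≤ c := by
    intro i
    have hvec := hB.mulVec_eigenvectorBasis i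
    have hvv : dotProduct (star (⇑(hB.eigenvectorBasis i))) (⇑(hB.eigenvectorBasis i))
        = 1 := by
      have hnorm := hB.eigenvectorBasis.orthonormal.1 i
      have hin : (inner ℂ (hB.eigenvectorBasis i) (hB.eigenvectorBasis i) : ℂ) = 1 := by
        rw [inner_self_eq_norm_sq_to_K, hnorm]
        norm_num
      rw [EuclideanSpace.inner_eq_star_dotProduct, dotProduct_comm] at hin; exact hin
    have hpos := hC.dotProduct_mulVec_nonneg (⇑(hB.eigenvectorBasis i))
    rw [Matrix.sub_mulVec, Matrix.smul_mulVec, Matrix.one_mulVec, hvec,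
      dotProduct_sub, dotProduct_smul, dotProduct_smul, hvv] at hpos
    simp only [smul_eq_mul, mul_one, Complex.real_smul] at hpos
    rw [← Complex.ofReal_sub] at hpos
    have := Complex.zero_le_real.mp hpos
    linarith
  set w : Fin n → ℂ := fun j =>
    ((c₁ - c₂ * ∑ t ∈ Finset.range (T + 1), lam j ^ t : ℝ) : ℂ) with hwdef
  have hw0 : 0 ≤ w := by
    intro j
    have := hw (lam j) (h0 j) (hup j)
    simpa [hwdef] using Complex.zero_le_real.2 this
  have hdiag : Matrix.diagonal w
      = ((c₁ : ℂ)) • 1 - ((c₂ : ℂ)) • ∑ t ∈ Finset.range (T + 1),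
          (Matrix.diagonal d) ^ t := by
    simp only [Matrix.diagonal_pow]
    ext i j
    by_cases hij : i = j
    · subst hij
      simp only [Matrix.diagonal_apply_eq, Matrix.sub_apply, Matrix.smul_apply,
        Matrix.one_apply_eq, Matrix.sum_apply, smul_eq_mul, mul_one, hwdef, hd,
        Pi.pow_apply, Function.comp_apply]
      push_cast
      ring_nf
      rfl
    · simp [Matrix.sum_apply, Matrix.diagonal_apply_ne _ hij, Matrix.one_apply_ne hij, hij]
  have hWU : U * Matrix.diagonal w * star U
      = ((c₁ : ℂ)) • 1 - ((c₂ : ℂ)) • ∑ t ∈ Finset.range (T + 1), B ^ t := by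
    rw [hdiag, mul_sub, sub_mul]
    congr 1
    · rw [mul_smul_comm, mul_one, smul_mul_assoc, hU1]
    · rw [mul_smul_comm, smul_mul_assoc]
      congr 1
      rw [Finset.mul_sum, Finset.sum_mul]
      exact Finset.sum_congr rfl fun t _ => (hBpow t).symm
  have hfinal := (Matrix.PosSemidef.diagonal hw0).mul_mul_conjTranspose_same U
  rw [← Matrix.star_eq_conjTranspose] at hfinal
  exact hWU ▸ hfinal

end CPAux

/-- **CP-map identity (i).**
`(1/m) Σ_{t=0}^{T} P M_contᵗ(I/D) P ≤ (1/k)(1/D) P`, where `P = ∏_{i∈S} Πᵢ`. -/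
theorem cp_map_identity_i
    (D m : ℕ)
    (P : Fin m → Matrix (Fin D) (Fin D) ℂ)
    (hherm : ∀ i, (P i).IsHermitian)
    (hidem : ∀ i, P i * P i = P i)
    (hcomm : ∀ i j, Commute (P i) (P j))
    (S : Finset (Fin m)) (k : ℕ) (hk : S.card = k) (hk1 : 1 ≤ k)
    (T : ℕ) :
    let Pm := S.noncommProd P (fun a _ b _ _ => hcomm a b)
    ((((1 / ((k : ℝ) * D) : ℝ)) : ℂ) • Pm
      - ((1 : ℂ) / m) • ∑ t ∈ Finset.range (T + 1),
          Pm * ((Mcont P)^[t] (((1 : ℂ) / D) • 1)) * Pm).PosSemidef := by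
  classical
  intro Pm
  rw [show Pm = S.noncommProd P (fun a _ b _ _ => hcomm a b) from rfl]
  set Q := S.noncommProd P (fun a _ b _ _ => hcomm a b) with hQdef
  set B := ((1 : ℂ) / m) • ∑ j ∈ Sᶜ, ((1 : Matrix (Fin D) (Fin D) ℂ) - P j) with hBdef
  have hkm : k ≤ m := by
    have h := Finset.card_le_univ S
    rw [hk] at h
    simpa [Fintype.card_fin] using h
  have hm1 : 1 ≤ m := le_trans hk1 hkm
  have hmC : ((1 : ℂ) / m) = (((1 / (m : ℝ) : ℝ)) : ℂ) := by push_cast; ring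
  have hQherm : Q.IsHermitian := CPAux.np_herm P hherm hcomm S _
  have hQidem : Q * Q = Q := CPAux.np_idem P hidem hcomm S _
  have hterm : ∀ t : ℕ, Q * ((Mcont P)^[t] (((1 : ℂ) / D) • 1)) * Q
      = ((1 : ℂ) / D) • (Q * (B ^ t * Q)) := by
    intro t
    rw [CPAux.iter_eq P hidem hcomm t, mul_smul_comm, smul_mul_assoc]
    congr 1
    rw [mul_assoc, CPAux.pow_mul_Q P hidem hcomm S t, ← hBdef, ← hQdef]
  rw [Finset.sum_congr rfl fun t _ => hterm t, ← Finset.smul_sum, ← Finset.mul_sum,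
    ← Finset.sum_mul, smul_smul]
  have hc2 : ((1 : ℂ) / m) * ((1 : ℂ) / D) = (((1 / ((m : ℝ) * D) : ℝ)) : ℂ) := by
    push_cast; ring
  rw [hc2]
  set c₁ : ℝ := 1 / ((k : ℝ) * D) with hc₁
  set c₂ : ℝ := 1 / ((m : ℝ) * D) with hc₂
  set W : Matrix (Fin D) (Fin D) ℂ :=
    ((c₁ : ℂ)) • 1 - ((c₂ : ℂ)) • ∑ t ∈ Finset.range (T + 1), B ^ t with hWdef
  have hassemble : ((c₁ : ℝ) : ℂ) • Q
      - ((c₂ : ℝ) : ℂ) • (Q * ((∑ t ∈ Finset.range (T + 1), B ^ t) * Q)) = Q * W * Q := by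
    rw [hWdef, mul_sub, sub_mul]
    congr 1
    · rw [mul_smul_comm, mul_one, smul_mul_assoc, hQidem]
    · rw [mul_smul_comm, smul_mul_assoc, mul_assoc]
  rw [hassemble]
  -- PSD of the building blocks
  have hBpsd : B.PosSemidef := by
    rw [hBdef, hmC]
    exact CPAux.smul_psd _ (by positivity) (CPAux.sum_psd _ _ fun i _ =>
      CPAux.proj_psd (Matrix.isHermitian_one.sub (hherm i)) (CPAux.one_sub_idem P hidem i))
  set c : ℝ := ((m : ℝ) - k) / m with hc
  have hcard : Sᶜ.card = m - k := by
    rw [Finset.card_compl, hk]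
    simp [Fintype.card_fin]
  have hsub : ∑ j ∈ Sᶜ, ((1 : Matrix (Fin D) (Fin D) ℂ) - P j)
      = (((m - k : ℕ)) : ℂ) • 1 - ∑ j ∈ Sᶜ, P j := by
    rw [Finset.sum_sub_distrib, Finset.sum_const, hcard, ← Nat.cast_smul_eq_nsmul ℂ]
  have hscal : ((1 : ℂ) / m) * (((m - k : ℕ)) : ℂ) = ((c : ℝ) : ℂ) := by
    have hmk : ((m - k : ℕ) : ℝ) = (m : ℝ) - k := by
      exact Nat.cast_sub hkm
    have hm0 : (m : ℂ) ≠ 0 := by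
      exact_mod_cast Nat.cast_ne_zero.mpr (by omega)
    rw [hc]
    push_cast [hmk]
    field_simp
    rw [Nat.cast_sub hkm]
  have hCpsd : (((c : ℝ) : ℂ) • 1 - B).PosSemidef := by
    have heq : ((c : ℝ) : ℂ) • (1 : Matrix (Fin D) (Fin D) ℂ) - B
        = ((1 : ℂ) / m) • ∑ j ∈ Sᶜ, P j := by
      rw [hBdef, hsub, ← hscal]
      module
    rw [heq, hmC]
    exact CPAux.smul_psd _ (by positivity) (CPAux.sum_psd _ _ fun i _ =>
      CPAux.proj_psd (hherm i) (hidem i))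
  have hWpsd : W.PosSemidef := by
    rw [hWdef]
    exact CPAux.W_psd B hBpsd c hCpsd c₁ c₂ T fun lam hl0 hlup =>
      CPAux.key_real k m D T hk1 hkm lam hl0 hlup
  have hfin := hWpsd.conjTranspose_mul_mul_same Q
  rw [hQherm.eq] at hfin
  exact hfin
end

section
/- (Lemma 'tian', invertible case.) Let Π₁, …, Π_m be projectors on ℂ^D such that Q = Σ_{i=1}^{m} Πᵢ is invertible (equivalently, positive definite). Let S ⊆ {1,…,m} be a subset of size k ≥ 1 whose members pairwise commute, and let P = ∏_{i∈S} Πᵢ. Then P Q⁻¹ P ≤ (1/k) P in the Loewner order. -/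
open scoped ComplexOrder

open Matrix Finset

lemma dot_shift (D : ℕ) {A : Matrix (Fin D) (Fin D) ℂ} (hA : A.IsHermitian) (x y : Fin D → ℂ) :
    star (A *ᵥ x) ⬝ᵥ y = star x ⬝ᵥ (A *ᵥ y) := by
  rw [Matrix.star_mulVec, hA.eq, ← dotProduct_mulVec]

lemma sum_mulVec' {ι D : Type*} [DecidableEq ι] [Fintype D] (t : Finset ι) (M : ι → Matrix D D ℂ)
    (v : D → ℂ) : (∑ i ∈ t, M i) *ᵥ v = ∑ i ∈ t, (M i *ᵥ v) := by
  induction t using Finset.induction_on with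
  | empty => simp [Matrix.zero_mulVec]
  | insert _ _ h ih => rw [Finset.sum_insert h, Finset.sum_insert h, Matrix.add_mulVec, ih]

lemma dot_sum' {ι D : Type*} [DecidableEq ι] [Fintype D] (t : Finset ι) (v : D → ℂ)
    (f : ι → D → ℂ) : v ⬝ᵥ (∑ i ∈ t, f i) = ∑ i ∈ t, v ⬝ᵥ f i := by
  induction t using Finset.induction_on with
  | empty => simp
  | insert _ _ h ih => rw [Finset.sum_insert h, Finset.sum_insert h, dotProduct_add, ih]

lemma proj_quad_nonneg (D : ℕ) {A : Matrix (Fin D) (Fin D) ℂ} (hA : A.IsHermitian)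
    (h2 : A * A = A) (u : Fin D → ℂ) : 0 ≤ star u ⬝ᵥ (A *ᵥ u) := by
  have : star u ⬝ᵥ (A *ᵥ u) = star (A *ᵥ u) ⬝ᵥ (A *ᵥ u) := by
    rw [dot_shift D hA, Matrix.mulVec_mulVec, h2]
  rw [this]
  exact dotProduct_star_self_nonneg _

lemma tian_aux (D m : ℕ) (P : Fin m → Matrix (Fin D) (Fin D) ℂ)
    (hherm : ∀ i, (P i).IsHermitian) (hidem : ∀ i, P i * P i = P i) :
    ∀ (S : Finset (Fin m)) (hc : ∀ a ∈ S, ∀ b ∈ S, Commute (P a) (P b)),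
      (S.noncommProd P (fun a ha b hb _ => hc a ha b hb)).IsHermitian ∧
      (S.noncommProd P (fun a ha b hb _ => hc a ha b hb)) *
        (S.noncommProd P (fun a ha b hb _ => hc a ha b hb)) =
        S.noncommProd P (fun a ha b hb _ => hc a ha b hb) ∧
      ∀ i ∈ S, (S.noncommProd P (fun a ha b hb _ => hc a ha b hb)) * P i =
        S.noncommProd P (fun a ha b hb _ => hc a ha b hb) := by
  intro S
  induction S using Finset.induction_on with
  | empty =>
      intro hc
      simp [Finset.noncommProd_empty, Matrix.isHermitian_one]
      have h0 := Finset.noncommProd_empty P (fun a ha b hb _ => hc a ha b hb)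
      rw [h0]
      exact ⟨Matrix.isHermitian_one, mul_one 1⟩
  | @insert a s ha ih =>
      intro hc
      have hc' : ∀ x ∈ s, ∀ y ∈ s, Commute (P x) (P y) :=
        fun x hx y hy => hc x (mem_insert_of_mem hx) y (mem_insert_of_mem hy)
      obtain ⟨ihH, ihI, ihA⟩ := ih hc'
      set R := s.noncommProd P (fun a ha b hb _ => hc' a ha b hb) with hR
      have hprod : (insert a s).noncommProd P (fun a ha b hb _ => hc a ha b hb) = P a * R := by
        exact Finset.noncommProd_insert_of_notMem _ _ _ _ ha
      have hcomm : Commute (P a) R :=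
        Finset.noncommProd_commute _ _ _ _
          (fun y hy => hc a (mem_insert_self a s) y (mem_insert_of_mem hy))
      rw [hprod]
      refine ⟨?_, ?_, ?_⟩
      · show (P a * R)ᴴ = P a * R
        rw [Matrix.conjTranspose_mul, ihH.eq, (hherm a).eq, hcomm.eq]
      · calc P a * R * (P a * R) = P a * (R * P a) * R := by
              rw [mul_assoc, mul_assoc, mul_assoc]
          _ = P a * P a * (R * R) := by rw [← hcomm.eq, ← mul_assoc, mul_assoc]
          _ = P a * R := by rw [hidem a, ihI]
      · intro i hi
        rcases Finset.mem_insert.mp hi with h | h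
        · rw [h, mul_assoc, ← hcomm.eq, ← mul_assoc, hidem a]
        · rw [mul_assoc, ihA i h]

/-- **Lemma 'tian', invertible case.** If `Q = Σᵢ Πᵢ` is invertible and
`P = ∏_{i∈S} Πᵢ` is a product of `k` pairwise-commuting projectors, then
`P Q⁻¹ P ≤ (1/k) P`. -/
theorem tian_invertible
    (D m : ℕ)
    (P : Fin m → Matrix (Fin D) (Fin D) ℂ)
    (hherm : ∀ i, (P i).IsHermitian)
    (hidem : ∀ i, P i * P i = P i)
    (hQ : IsUnit (∑ i, P i).det)
    (S : Finset (Fin m)) (k : ℕ) (hk : S.card = k) (hk1 : 1 ≤ k)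
    (hcomm : ∀ i ∈ S, ∀ j ∈ S, Commute (P i) (P j)) :
    let Pm := S.noncommProd P (fun a ha b hb _ => hcomm a ha b hb)
    (((1 / (k : ℝ) : ℝ) : ℂ) • Pm - Pm * (∑ i, P i)⁻¹ * Pm).PosSemidef := by
  intro Pm
  obtain ⟨hPmH₀, hPmI₀, hPmA₀⟩ := tian_aux D m P hherm hidem S hcomm
  have hPmH : Pm.IsHermitian := hPmH₀
  have hPmI : Pm * Pm = Pm := hPmI₀
  have hPmA : ∀ i ∈ S, Pm * P i = Pm := hPmA₀
  clear hPmH₀ hPmI₀ hPmA₀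
  set Q : Matrix (Fin D) (Fin D) ℂ := ∑ i, P i with hQdef
  have hPpsd : ∀ i, (P i).PosSemidef := fun i =>
    .of_dotProduct_mulVec_nonneg (hherm i) (fun x => proj_quad_nonneg D (hherm i) (hidem i) x)
  have hQH : Q.IsHermitian := by
    show Qᴴ = Q
    rw [hQdef, Matrix.conjTranspose_sum]
    exact Finset.sum_congr rfl fun i _ => (hherm i).eq
  have hQpsd : Q.PosSemidef := by
    refine .of_dotProduct_mulVec_nonneg hQH (fun x => ?_)
    rw [hQdef, sum_mulVec', dot_sum']
    exact Finset.sum_nonneg fun i _ => (hPpsd i).dotProduct_mulVec_nonneg x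
  have hQinvH : (Q⁻¹).IsHermitian := hQpsd.inv.isHermitian
  have hQQinv : Q * Q⁻¹ = 1 := Matrix.mul_nonsing_inv Q hQ
  have hPmComm : ∀ i ∈ S, Commute (P i) Pm := fun i hi =>
    Finset.noncommProd_commute _ _ _ _ (fun y hy => hcomm i hi y hy)
  have hPmA' : ∀ i ∈ S, P i * Pm = Pm := fun i hi => by
    rw [(hPmComm i hi).eq]; exact hPmA i hi
  have hsubH : ∀ i ∈ S, (P i - Pm).IsHermitian := fun i hi => (hherm i).sub hPmH
  have hsubI : ∀ i ∈ S, (P i - Pm) * (P i - Pm) = P i - Pm := fun i hi => by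
    rw [Matrix.sub_mul, Matrix.mul_sub, Matrix.mul_sub, hidem i, hPmA i hi, hPmA' i hi, hPmI]
    abel
  have hgoalH : ((((1 / (k : ℝ) : ℝ)) : ℂ) • Pm - Pm * Q⁻¹ * Pm).IsHermitian := by
    have h1 : (Pm * Q⁻¹ * Pm).IsHermitian := by
      show (Pm * Q⁻¹ * Pm)ᴴ = _
      rw [Matrix.conjTranspose_mul, Matrix.conjTranspose_mul, hPmH.eq, hQinvH.eq, mul_assoc]
    have h2 : ((((1 / (k : ℝ) : ℝ)) : ℂ) • Pm).IsHermitian := by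
      show _ = _
      rw [Matrix.conjTranspose_smul, hPmH.eq]
      congr 1
      simp [Complex.star_def, Complex.conj_ofReal]
    exact h2.sub h1
  refine .of_dotProduct_mulVec_nonneg hgoalH (fun x => ?_)
  set w : Fin D → ℂ := Pm *ᵥ x with hw
  set u : Fin D → ℂ := Q⁻¹ *ᵥ w with hu
  have hQu : Q *ᵥ u = w := by
    rw [hu, Matrix.mulVec_mulVec, hQQinv, Matrix.one_mulVec]
  set a : ℂ := star u ⬝ᵥ (Q *ᵥ u) with ha
  set b : ℂ := star u ⬝ᵥ (Pm *ᵥ u) with hb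
  set c : ℂ := star w ⬝ᵥ w with hc
  have hPmw : Pm *ᵥ w = w := by rw [hw, Matrix.mulVec_mulVec, hPmI]
  have hid1 : star w ⬝ᵥ u = a := by
    rw [← hQu, dot_shift D hQH]
  have hid2 : star w ⬝ᵥ (Pm *ᵥ u) = a := by
    have h := dot_shift D hPmH w u
    rw [hPmw] at h
    rw [← h, hid1]
  have hid3 : star (Pm *ᵥ u) ⬝ᵥ w = a := by
    rw [dot_shift D hPmH, hPmw, ← hQu, ha]
  have hid4 : star (Pm *ᵥ u) ⬝ᵥ (Pm *ᵥ u) = b := by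
    rw [dot_shift D hPmH, Matrix.mulVec_mulVec, hPmI, hb]
  have hbnn : 0 ≤ b := by
    rw [hb]; exact proj_quad_nonneg D hPmH hPmI u
  have hknn : (0 : ℂ) ≤ (k : ℂ) := by
    exact_mod_cast Complex.zero_le_real.mpr (Nat.cast_nonneg k)
  have hkb : (k : ℂ) * b ≤ a := by
    have hterm : ∀ i ∈ S, b ≤ star u ⬝ᵥ (P i *ᵥ u) := by
      intro i hi
      have h0 : 0 ≤ star u ⬝ᵥ ((P i - Pm) *ᵥ u) :=
        proj_quad_nonneg D (hsubH i hi) (hsubI i hi) u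
      rw [Matrix.sub_mulVec, dotProduct_sub, sub_nonneg] at h0
      exact h0
    have hsum : ∑ i ∈ S, (star u ⬝ᵥ (P i *ᵥ u)) ≤ a := by
      rw [ha, hQdef, sum_mulVec', dot_sum']
      refine Finset.sum_le_sum_of_subset_of_nonneg (Finset.subset_univ S) ?_
      intro i _ _
      exact proj_quad_nonneg D (hherm i) (hidem i) u
    calc (k : ℂ) * b = ∑ _i ∈ S, b := by rw [Finset.sum_const, hk, nsmul_eq_mul]
      _ ≤ ∑ i ∈ S, (star u ⬝ᵥ (P i *ᵥ u)) := Finset.sum_le_sum hterm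
      _ ≤ a := hsum
  have hka : (k : ℂ) * a ≤ c := by
    have h0 : 0 ≤ star (w - (k : ℂ) • (Pm *ᵥ u)) ⬝ᵥ (w - (k : ℂ) • (Pm *ᵥ u)) :=
      dotProduct_star_self_nonneg _
    have hexp : star (w - (k : ℂ) • (Pm *ᵥ u)) ⬝ᵥ (w - (k : ℂ) • (Pm *ᵥ u)) =
        c - (k : ℂ) * a - (k : ℂ) * a + (k : ℂ) * ((k : ℂ) * b) := by
      have hsk : star ((k : ℂ)) = (k : ℂ) := by simp
      rw [star_sub, star_smul, hsk, sub_dotProduct, dotProduct_sub,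
        dotProduct_sub, smul_dotProduct, smul_dotProduct,
        dotProduct_smul, dotProduct_smul, hid2, hid3, hid4, ← hc]
      simp only [smul_eq_mul]
      ring
    rw [hexp] at h0
    have h1 : (k : ℂ) * ((k : ℂ) * b) ≤ (k : ℂ) * a := mul_le_mul_of_nonneg_left hkb hknn
    have h2 : c - (k : ℂ) * a - (k : ℂ) * a + (k : ℂ) * ((k : ℂ) * b)
        ≤ c - (k : ℂ) * a - (k : ℂ) * a + (k : ℂ) * a := by
      exact add_le_add_right h1 _
    have h3 : c - (k : ℂ) * a - (k : ℂ) * a + (k : ℂ) * a = c - (k : ℂ) * a := by ring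
    have h4 : 0 ≤ c - (k : ℂ) * a := by
      rw [← h3]; exact le_trans h0 h2
    exact sub_nonneg.mp h4
  -- conclude
  have hxPmx : star x ⬝ᵥ (Pm *ᵥ x) = c := by
    rw [hc, hw, dot_shift D hPmH, Matrix.mulVec_mulVec, hPmI]
  have hexp2 : star x ⬝ᵥ (((((1 / (k : ℝ) : ℝ)) : ℂ) • Pm - Pm * Q⁻¹ * Pm) *ᵥ x) =
      (((1 / (k : ℝ) : ℝ)) : ℂ) * c - a := by
    rw [Matrix.sub_mulVec, dotProduct_sub]
    congr 1
    · rw [Matrix.smul_mulVec, dotProduct_smul, smul_eq_mul, hxPmx]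
    · have h1 : (Pm * Q⁻¹ * Pm) *ᵥ x = Pm *ᵥ u := by
        rw [hu, hw, ← Matrix.mulVec_mulVec, ← Matrix.mulVec_mulVec]
      rw [h1]
      have h2 := dot_shift D hPmH x u
      rw [← hw] at h2
      rw [← h2, hid1]
  rw [hexp2]
  have hkinvnn : (0 : ℂ) ≤ (((1 / (k : ℝ)) : ℝ) : ℂ) := by
    exact_mod_cast Complex.zero_le_real.mpr (by positivity : (0:ℝ) ≤ 1 / (k:ℝ))
  have hkne : ((k : ℝ)) ≠ 0 := by
    exact_mod_cast Nat.one_le_iff_ne_zero.mp hk1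
  have hfin : a ≤ (((1 / (k : ℝ)) : ℝ) : ℂ) * c := by
    have h1 : (((1 / (k : ℝ)) : ℝ) : ℂ) * ((k : ℂ) * a) ≤ (((1 / (k : ℝ)) : ℝ) : ℂ) * c :=
      mul_le_mul_of_nonneg_left hka hkinvnn
    have h2 : (((1 / (k : ℝ)) : ℝ) : ℂ) * ((k : ℂ) * a) = a := by
      push_cast
      field_simp
    rw [h2] at h1
    exact h1
  exact sub_nonneg.mpr hfin
end

section
/- (Exponential decay of the continuation map onto excited states.) Let Π₁, …, Π_m be projectors on ℂ^D, let H = (1/m) Σ_{i=1}^{m} Πᵢ, let G be the orthogonal projection onto the kernel of H, and suppose δ > 0 is a real number with H ≥ δ·(I − G) in the Loewner order. Define M(ρ) = (1/m) Σ_{i=1}^{m} (I−Πᵢ) ρ (I−Πᵢ). Then for every integer t ≥ 0, M^t(I) ≤ G + (1−δ)ᵗ (I − G) in the Loewner order. -/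
open scoped ComplexOrder

section Helpers

open Matrix

private lemma psd_smul_real_s9 {n : ℕ} {A : Matrix (Fin n) (Fin n) ℂ} (hA : A.PosSemidef)
    {r : ℝ} (hr : 0 ≤ r) : ((r : ℂ) • A).PosSemidef := by
  refine Matrix.PosSemidef.of_dotProduct_mulVec_nonneg ?_ (fun x => ?_)
  · unfold Matrix.IsHermitian
    rw [Matrix.conjTranspose_smul, hA.1.eq]
    congr 1
    simp [RCLike.star_def]
  · rw [Matrix.smul_mulVec, dotProduct_smul]
    exact mul_nonneg (by exact_mod_cast hr) (hA.dotProduct_mulVec_nonneg x)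

private lemma psd_sum {n : ℕ} {ι : Type*} (s : Finset ι) (f : ι → Matrix (Fin n) (Fin n) ℂ)
    (h : ∀ i ∈ s, (f i).PosSemidef) : (∑ i ∈ s, f i).PosSemidef :=
  Finset.sum_induction f _ (fun _ _ ha hb => ha.add hb) .zero h

private lemma my_sum_mulVec {n D : ℕ} {ι : Type*} (s : Finset ι)
    (f : ι → Matrix (Fin n) (Fin D) ℂ) (v : Fin D → ℂ) :
    (∑ i ∈ s, f i) *ᵥ v = ∑ i ∈ s, (f i) *ᵥ v := by
  ext x
  simp only [Matrix.mulVec, dotProduct, Matrix.sum_apply, Finset.sum_apply,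
    Finset.sum_mul]
  rw [Finset.sum_comm]

private lemma my_dot_sum {n : ℕ} {ι : Type*} (s : Finset ι) (v : Fin n → ℂ)
    (f : ι → (Fin n → ℂ)) :
    v ⬝ᵥ (∑ i ∈ s, f i) = ∑ i ∈ s, v ⬝ᵥ (f i) := by
  simp only [dotProduct, Finset.sum_apply, Finset.mul_sum]
  rw [Finset.sum_comm]

private lemma eq_one_of_forall_mulVec {n : ℕ} {A : Matrix (Fin n) (Fin n) ℂ}
    (h : ∀ v, A *ᵥ v = v) : A = 1 := by
  ext a b
  have := congrFun (h (Pi.single b 1)) a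
  rw [Matrix.mulVec_single_one, Matrix.col_apply] at this
  try simp only [mul_one] at this
  rw [this, Matrix.one_apply, Pi.single_apply]

end Helpers

open Matrix

/-- **Exponential decay of the continuation map onto excited states.**
With `H = (1/m) Σᵢ Πᵢ`, `G` the orthogonal projection onto `ker H`, and
spectral gap `H ≥ δ(I−G)`, we have `Mᵗ(I) ≤ G + (1−δ)ᵗ (I−G)`. -/
theorem continuation_map_exponential_decay
    (D m : ℕ)
    (P : Fin m → Matrix (Fin D) (Fin D) ℂ)
    (hherm : ∀ i, (P i).IsHermitian)
    (hidem : ∀ i, P i * P i = P i)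
    (G : Matrix (Fin D) (Fin D) ℂ)
    (hGherm : G.IsHermitian) (hGidem : G * G = G)
    (hGker : ∀ v : Fin D → ℂ,
      (((1 : ℂ) / m) • ∑ i, P i).mulVec v = 0 ↔ G.mulVec v = v)
    (δ : ℝ) (hδ : 0 < δ)
    (hgap : ((((1 : ℂ) / m) • ∑ i, P i) - (δ : ℂ) • (1 - G)).PosSemidef)
    (t : ℕ) :
    (G + (((1 - δ) ^ t : ℝ) : ℂ) • (1 - G) - (Mcont P)^[t] 1).PosSemidef := by
  classical
  -- linearity of Mcont
  have Mcont_sub : ∀ A B, Mcont P (A - B) = Mcont P A - Mcont P B := by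
    intro A B
    simp only [Mcont, mul_sub, sub_mul, Finset.sum_sub_distrib, smul_sub]
    abel
  have Mcont_add : ∀ A B, Mcont P (A + B) = Mcont P A + Mcont P B := by
    intro A B
    simp only [Mcont, mul_add, add_mul, Finset.sum_add_distrib, smul_add]
  have Mcont_smul : ∀ (c : ℂ) A, Mcont P (c • A) = c • Mcont P A := by
    intro c A
    simp only [Mcont, Matrix.mul_smul, Matrix.smul_mul, ← Finset.smul_sum]
    rw [smul_comm]
  -- Mcont preserves positive semidefiniteness
  have hMpsd : ∀ X : Matrix (Fin D) (Fin D) ℂ, X.PosSemidef → (Mcont P X).PosSemidef := by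
    intro X hX
    unfold Mcont
    have hc : ((1 : ℂ) / m) = (((1 / m : ℝ)) : ℂ) := by push_cast; ring
    rw [hc]
    refine psd_smul_real_s9 ?_ (by positivity)
    refine psd_sum _ _ fun i _ => ?_
    have h2 : (1 - P i)ᴴ = 1 - P i := by
      rw [Matrix.conjTranspose_sub, Matrix.conjTranspose_one, (hherm i).eq]
    have := hX.mul_mul_conjTranspose_same (1 - P i)
    rwa [h2] at this
  rcases Nat.eq_zero_or_pos m with hm | hm
  · -- degenerate case m = 0
    subst hm
    have hG1 : G = 1 := by
      refine eq_one_of_forall_mulVec fun v => (hGker v).mp ?_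
      simp
    have hM0 : ∀ ρ, Mcont P ρ = 0 := by intro ρ; simp [Mcont]
    cases t with
    | zero =>
      have : G + (((1 - δ) ^ 0 : ℝ) : ℂ) • ((1 : Matrix (Fin D) (Fin D) ℂ) - G)
          - (Mcont P)^[0] 1 = 0 := by
        simp
      rw [this]; exact .zero
    | succ k =>
      have hit : (Mcont P)^[k + 1] (1 : Matrix (Fin D) (Fin D) ℂ) = 0 := by
        rw [Function.iterate_succ_apply, hM0]
        exact Function.iterate_fixed (hM0 0) k
      rw [hit, hG1]
      simpa using Matrix.PosSemidef.one (n := Fin D) (R := ℂ)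
  -- main case : m > 0
  have hm' : (m : ℂ) ≠ 0 := Nat.cast_ne_zero.mpr hm.ne'
  have hinv : ((1 : ℂ) / m) * m = 1 := by field_simp
  have hsmul_cancel : ∀ X : Matrix (Fin D) (Fin D) ℂ, ((1 : ℂ) / m) • ((m : ℕ) • X) = X := by
    intro X
    rw [← Nat.cast_smul_eq_nsmul ℂ, smul_smul, hinv, one_smul]
  -- every P i kills the range of G
  have hPG : ∀ i, P i * G = 0 := by
    intro i
    have key : ∀ v, (P i) *ᵥ (G *ᵥ v) = 0 := by
      intro v
      obtain ⟨w, hw, hGw⟩ : ∃ w, G *ᵥ v = w ∧ G *ᵥ w = w :=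
        ⟨G *ᵥ v, rfl, by rw [Matrix.mulVec_mulVec, hGidem]⟩
      rw [hw]
      suffices h : P i *ᵥ w = 0 by exact h
      have h0 : (((1 : ℂ) / m) • ∑ j, P j) *ᵥ w = 0 := (hGker w).mpr hGw
      have h0' : (∑ j, P j) *ᵥ w = 0 := by
        rw [Matrix.smul_mulVec] at h0
        rcases smul_eq_zero.mp h0 with h | h
        · exact absurd h (by simp [hm'])
        · exact h
      have hterm : ∀ j, star w ⬝ᵥ ((P j) *ᵥ w) = star ((P j) *ᵥ w) ⬝ᵥ ((P j) *ᵥ w) := by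
        intro j
        calc star w ⬝ᵥ ((P j) *ᵥ w) = star w ⬝ᵥ ((P j * P j) *ᵥ w) := by rw [hidem]
        _ = star w ⬝ᵥ ((P j) *ᵥ ((P j) *ᵥ w)) := by rw [Matrix.mulVec_mulVec]
        _ = (Matrix.vecMul (star w) (P j)) ⬝ᵥ ((P j) *ᵥ w) := by rw [dotProduct_mulVec]
        _ = star ((P j) *ᵥ w) ⬝ᵥ ((P j) *ᵥ w) := by rw [Matrix.star_mulVec, (hherm j).eq]
      have hsum : ∑ j, star w ⬝ᵥ ((P j) *ᵥ w) = 0 := by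
        rw [← my_dot_sum, ← my_sum_mulVec, h0', dotProduct_zero]
      have heach := (Finset.sum_eq_zero_iff_of_nonneg (fun j _ => by
        rw [hterm j]; exact dotProduct_star_self_nonneg _)).mp hsum i (Finset.mem_univ i)
      rw [hterm i] at heach
      exact dotProduct_star_self_eq_zero.mp heach
    ext a b
    have h1 : (P i * G) *ᵥ Pi.single b 1 = 0 := by
      rw [← Matrix.mulVec_mulVec]; exact key _
    have := congrFun h1 a
    rw [Matrix.mulVec_single_one, Matrix.col_apply] at this
    simpa using this
  have hGP : ∀ i, G * P i = 0 := by
    intro i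
    have h := congrArg Matrix.conjTranspose (hPG i)
    rwa [Matrix.conjTranspose_mul, hGherm.eq, (hherm i).eq, Matrix.conjTranspose_zero] at h
  -- M fixes G and maps 1 to 1 - H
  have hMG : Mcont P G = G := by
    unfold Mcont
    have h1 : ∀ i : Fin m, (1 - P i) * G * (1 - P i) = G := by
      intro i
      rw [sub_mul, one_mul, hPG, sub_zero, mul_sub, mul_one, hGP, sub_zero]
    rw [Finset.sum_congr rfl fun i _ => h1 i, Finset.sum_const, Finset.card_univ,
      Fintype.card_fin]
    exact hsmul_cancel G
  have hM1 : Mcont P 1 = 1 - ((1 : ℂ) / m) • ∑ i, P i := by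
    unfold Mcont
    have h1 : ∀ i : Fin m, (1 - P i) * 1 * (1 - P i) = 1 - P i := by
      intro i
      rw [mul_one, sub_mul, one_mul, mul_sub, mul_one, hidem]
      abel
    rw [Finset.sum_congr rfl fun i _ => h1 i, Finset.sum_sub_distrib, Finset.sum_const,
      Finset.card_univ, Fintype.card_fin, smul_sub, hsmul_cancel]
  -- either δ ≤ 1 or G = 1
  by_cases hG1 : G = 1
  · -- then all P i = 0 and M is the identity
    have hP0 : ∀ i, P i = 0 := by
      intro i
      have := hPG i
      rwa [hG1, mul_one] at this
    have hfix : Mcont P (1 : Matrix (Fin D) (Fin D) ℂ) = 1 := by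
      unfold Mcont
      simp only [hP0, sub_zero, one_mul, mul_one, Finset.sum_const, Finset.card_univ,
        Fintype.card_fin]
      exact hsmul_cancel 1
    rw [Function.iterate_fixed hfix, hG1]
    have : (1 : Matrix (Fin D) (Fin D) ℂ) + (((1 - δ) ^ t : ℝ) : ℂ) •
        ((1 : Matrix (Fin D) (Fin D) ℂ) - 1) - 1 = 0 := by
      rw [sub_self, smul_zero, add_zero, sub_self]
    rw [this]; exact .zero
  · -- G ≠ 1 : extract δ ≤ 1 from the gap condition
    have hδ1 : δ ≤ 1 := by
      obtain ⟨v, hv⟩ : ∃ v, G *ᵥ v ≠ v := by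
        by_contra h
        push_neg at h
        exact hG1 (eq_one_of_forall_mulVec h)
      obtain ⟨w, hwdef⟩ : ∃ w, w = v - G *ᵥ v := ⟨_, rfl⟩
      have hw : w ≠ 0 := by
        rw [hwdef]
        exact sub_ne_zero.mpr fun h => hv h.symm
      have hGw : G *ᵥ w = 0 := by
        rw [hwdef, Matrix.mulVec_sub, Matrix.mulVec_mulVec, hGidem, sub_self]
      have h1Gw : ((1 : Matrix (Fin D) (Fin D) ℂ) - G) *ᵥ w = w := by
        rw [Matrix.sub_mulVec, Matrix.one_mulVec, hGw, sub_zero]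
      have hspos : 0 < star w ⬝ᵥ w := by
        rcases lt_or_eq_of_le (dotProduct_star_self_nonneg w) with h | h
        · exact h
        · exact absurd (dotProduct_star_self_eq_zero.mp h.symm) hw
      have hHw : (δ : ℂ) * (star w ⬝ᵥ w)
          ≤ star w ⬝ᵥ ((((1 : ℂ) / m) • ∑ i, P i) *ᵥ w) := by
        have hgapw := hgap.dotProduct_mulVec_nonneg w
        rw [Matrix.sub_mulVec, dotProduct_sub, sub_nonneg] at hgapw
        have hL : star w ⬝ᵥ (((δ : ℂ) • ((1 : Matrix (Fin D) (Fin D) ℂ) - G)) *ᵥ w)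
            = (δ : ℂ) * (star w ⬝ᵥ w) := by
          rw [Matrix.smul_mulVec, dotProduct_smul, h1Gw, smul_eq_mul]
        rwa [hL] at hgapw
      have hHw' : star w ⬝ᵥ ((((1 : ℂ) / m) • ∑ i, P i) *ᵥ w) ≤ star w ⬝ᵥ w := by
        have hpsd : ((1 : Matrix (Fin D) (Fin D) ℂ) - ((1 : ℂ) / m) • ∑ i, P i).PosSemidef := by
          rw [← hM1]; exact hMpsd 1 .one
        have := hpsd.dotProduct_mulVec_nonneg w
        rw [Matrix.sub_mulVec, dotProduct_sub, Matrix.one_mulVec, sub_nonneg] at this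
        exact this
      have hfin : 0 ≤ ((1 - δ : ℝ) : ℂ) * (star w ⬝ᵥ w) := by
        have h := hHw.trans hHw'
        have he : ((1 - δ : ℝ) : ℂ) * (star w ⬝ᵥ w)
            = star w ⬝ᵥ w - (δ : ℂ) * (star w ⬝ᵥ w) := by push_cast; ring
        rw [he]
        exact sub_nonneg.mpr h
      by_contra hc
      push_neg at hc
      have hpos : 0 < ((δ - 1 : ℝ) : ℂ) * (star w ⬝ᵥ w) :=
        mul_pos (Complex.zero_lt_real.mpr (by linarith)) hspos
      have he2 : ((1 - δ : ℝ) : ℂ) * (star w ⬝ᵥ w)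
          = -(((δ - 1 : ℝ) : ℂ) * (star w ⬝ᵥ w)) := by push_cast; ring
      rw [he2] at hfin
      exact not_lt_of_ge (neg_nonneg.mp hfin) hpos
    -- main induction
    induction t with
    | zero =>
      have : G + (((1 - δ) ^ 0 : ℝ) : ℂ) • ((1 : Matrix (Fin D) (Fin D) ℂ) - G)
          - (Mcont P)^[0] 1 = 0 := by
        simp
      rw [this]; exact .zero
    | succ k ih =>
      have hck : (0 : ℝ) ≤ (1 - δ) ^ k := pow_nonneg (by linarith) k
      have hfact : G + (((1 - δ) ^ (k + 1) : ℝ) : ℂ) • ((1 : Matrix (Fin D) (Fin D) ℂ) - G)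
            - (Mcont P)^[k + 1] 1
          = Mcont P (G + (((1 - δ) ^ k : ℝ) : ℂ) • (1 - G) - (Mcont P)^[k] 1)
            + (((1 - δ) ^ k : ℝ) : ℂ) •
              ((((1 : ℂ) / m) • ∑ i, P i) - (δ : ℂ) • (1 - G)) := by
        rw [Function.iterate_succ_apply', Mcont_sub, Mcont_add, Mcont_smul, Mcont_sub,
          hMG, hM1]
        have hpow : (((1 - δ) ^ (k + 1) : ℝ) : ℂ)
            = (((1 - δ) ^ k : ℝ) : ℂ) * ((1 - δ : ℝ) : ℂ) := by
          push_cast; ring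
        rw [hpow]
        match_scalars <;> push_cast <;> ring
      rw [hfact]
      exact (hMpsd _ ih).add (psd_smul_real_s9 hgap hck)
end

section
/- (Proposition on the first violation with spectral gap, non-commuting case.) Let Π₁, …, Π_m be projectors on ℂ^D, let H = (1/m) Σ_{i=1}^{m} Πᵢ, let G be the orthogonal projection onto the kernel of H, and suppose δ > 0 is a real number with H ≥ δ·(I − G) in the Loewner order. Then for every index a ∈ {1,…,m} and every integer T ≥ 0, the positive semidefinite matrix (1/m) · Σ_{t=0}^{T} (1/mᵗ) · Σ_{(i₁,…,i_t) ∈ {1,…,m}ᵗ} Π_a (I−Π_{i_t}) ⋯ (I−Π_{i₁}) (I/D) (I−Π_{i₁}) ⋯ (I−Π_{i_t}) Π_a is ≤ (1/(mδ)) · (1/D) Π_a in the Loewner order; in particular its trace is at most rank(Π_a)/(mδD). -/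
open scoped ComplexOrder
open Matrix

variable {D : ℕ}

lemma smulPSD {A : Matrix (Fin D) (Fin D) ℂ} (c : ℝ) (hc : 0 ≤ c) (hA : A.PosSemidef) :
    ((c : ℂ) • A).PosSemidef := by
  refine Matrix.PosSemidef.of_dotProduct_mulVec_nonneg ?_ ?_
  · unfold Matrix.IsHermitian
    rw [Matrix.conjTranspose_smul, hA.1]
    congr 1
    simp
  · intro x
    rw [Matrix.smul_mulVec, dotProduct_smul, smul_eq_mul]
    exact mul_nonneg (by exact_mod_cast hc) (hA.dotProduct_mulVec_nonneg x)

lemma psdTraceRe {A : Matrix (Fin D) (Fin D) ℂ} (hA : A.PosSemidef) : 0 ≤ A.trace.re := by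
  rw [Matrix.trace]
  have h : ∀ i, 0 ≤ (A i i).re := by
    intro i
    have := hA.dotProduct_mulVec_nonneg (Pi.single i 1)
    rw [Complex.le_def] at this
    have h2 : dotProduct (star (Pi.single i 1)) (A *ᵥ Pi.single i 1) = A i i := by
      simp [Matrix.mulVec_single, dotProduct, Pi.single_apply, apply_ite]
    rw [h2] at this
    exact this.1
  calc (0:ℝ) ≤ ∑ i, (A i i).re := Finset.sum_nonneg fun i _ => h i
  _ = _ := by rw [Complex.re_sum]; rfl

variable {D : ℕ}

lemma eig01 {A : Matrix (Fin D) (Fin D) ℂ} (hA : A.IsHermitian) (h2 : A * A = A) (i : Fin D) :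
    hA.eigenvalues i = 0 ∨ hA.eigenvalues i = 1 := by
  have hv := hA.mulVec_eigenvectorBasis i
  set μ := hA.eigenvalues i with hμ
  set v := ⇑(hA.eigenvectorBasis i) with hvdef
  have hv2 : A *ᵥ (A *ᵥ v) = (μ * μ) • v := by
    rw [hv, Matrix.mulVec_smul, hv, smul_smul]
  have hv3 : A *ᵥ (A *ᵥ v) = μ • v := by
    rw [Matrix.mulVec_mulVec, h2, hv]
  have hvne : v ≠ 0 := by
    intro h0
    refine (hA.eigenvectorBasis).toBasis.ne_zero i ?_
    apply (EuclideanSpace.equiv (Fin D) ℂ).injective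
    ext j
    exact congrFun h0 j
  have heq : (μ * μ) • v = μ • v := hv2 ▸ hv3
  have hmm : μ * μ = μ := by
    by_contra hne
    have h' := sub_eq_zero.mpr heq
    rw [← sub_smul, smul_eq_zero] at h'
    rcases h' with h | h
    · exact hne (by linarith [sub_eq_zero.mp h])
    · exact hvne h
  rcases mul_eq_zero.mp (show μ * (μ - 1) = 0 by nlinarith) with h | h
  · exact Or.inl h
  · exact Or.inr (by linarith)

lemma trace_eq_sum_eig {A : Matrix (Fin D) (Fin D) ℂ} (hA : A.IsHermitian) :
    A.trace = ∑ i, (hA.eigenvalues i : ℂ) := by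
  exact hA.trace_eq_sum_eigenvalues

lemma rank_proj_eq_trace {A : Matrix (Fin D) (Fin D) ℂ} (hA : A.IsHermitian) (h2 : A * A = A) :
    (A.rank : ℝ) = A.trace.re := by
  have ht : A.trace.re = ∑ i, hA.eigenvalues i := by
    rw [trace_eq_sum_eig hA, Complex.re_sum]
    simp
  rw [ht, hA.rank_eq_card_non_zero_eigs]
  rw [Fintype.card_subtype]
  rw [Finset.card_eq_sum_ones, Nat.cast_sum]
  rw [Finset.sum_filter]
  apply Finset.sum_congr rfl
  intro i _
  rcases eig01 hA h2 i with h | h <;> simp [h]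

variable {D m : ℕ} (P : Fin m → Matrix (Fin D) (Fin D) ℂ)

lemma chainFwd_zero (i : Fin 0 → Fin m) : chainFwd P 0 i = 1 := by
  simp [chainFwd]

lemma chainRev_zero (i : Fin 0 → Fin m) : chainRev P 0 i = 1 := by
  simp [chainRev]

lemma chainFwd_snoc (t : ℕ) (j : Fin t → Fin m) (k : Fin m) :
    chainFwd P (t + 1) (Fin.snoc j k) = chainFwd P t j * (1 - P k) := by
  unfold chainFwd
  rw [← List.ofFn_eq_map, ← List.ofFn_eq_map, List.ofFn_succ']
  rw [List.prod_concat]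
  congr 1
  · congr 1
    ext s
    simp [Fin.snoc_castSucc]
  · simp

lemma chainRev_snoc (t : ℕ) (j : Fin t → Fin m) (k : Fin m) :
    chainRev P (t + 1) (Fin.snoc j k) = (1 - P k) * chainRev P t j := by
  unfold chainRev
  rw [List.map_reverse, List.map_reverse, ← List.ofFn_eq_map, ← List.ofFn_eq_map,
    List.ofFn_succ']
  rw [List.concat_eq_append, List.reverse_append]
  simp only [List.reverse_cons, List.reverse_nil, List.nil_append, List.singleton_append,
    List.prod_cons]
  congr 2
  · simp
  · congr 1
    ext s
    simp [Fin.snoc_castSucc]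

/-- unnormalised chain sum -/
noncomputable def BB (t : ℕ) : Matrix (Fin D) (Fin D) ℂ :=
  ∑ i : Fin t → Fin m, chainRev P t i * chainFwd P t i

lemma BB_zero : BB P 0 = 1 := by
  simp [BB, chainRev_zero, chainFwd_zero]

lemma BB_succ (t : ℕ) :
    BB P (t + 1) = ∑ k, (1 - P k) * BB P t * (1 - P k) := by
  rw [BB]
  rw [← (Fin.snocEquiv (fun _ : Fin (t+1) => Fin m)).sum_comp
    (fun i => chainRev P (t+1) i * chainFwd P (t+1) i)]
  rw [Fintype.sum_prod_type]
  refine Finset.sum_congr rfl fun k _ => ?_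
  rw [BB, Finset.mul_sum, Finset.sum_mul]
  refine Finset.sum_congr rfl fun j _ => ?_

  have he : ((Fin.snocEquiv fun _ => Fin m) (k, j)) = Fin.snoc j k := rfl
  rw [he, chainRev_snoc, chainFwd_snoc]
  noncomm_ring

variable {D m : ℕ}

-- projector is psd
lemma proj_psd {A : Matrix (Fin D) (Fin D) ℂ} (hA : A.IsHermitian) (h2 : A * A = A) :
    A.PosSemidef := by
  have : A = Aᴴ * A := by rw [hA]; exact h2.symm
  rw [this]
  exact Matrix.posSemidef_conjTranspose_mul_self A

lemma psd_conj {A B : Matrix (Fin D) (Fin D) ℂ} (hA : A.PosSemidef) (hB : B.IsHermitian) :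
    (B * A * B).PosSemidef := by
  have := hA.mul_mul_conjTranspose_same B
  rwa [hB] at this

lemma psd_sub_trans {A B C : Matrix (Fin D) (Fin D) ℂ} (h1 : (A - B).PosSemidef)
    (h2 : (B - C).PosSemidef) : (A - C).PosSemidef := by
  have := h1.add h2
  rwa [sub_add_sub_cancel] at this

section main
variable (P : Fin m → Matrix (Fin D) (Fin D) ℂ) (G : Matrix (Fin D) (Fin D) ℂ)

lemma hPG (hherm : ∀ i, (P i).IsHermitian) (hidem : ∀ i, P i * P i = P i)
    (hGidem : G * G = G)
    (hGker : ∀ v : Fin D → ℂ,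
      (((1 : ℂ) / m) • ∑ i, P i).mulVec v = 0 ↔ G.mulVec v = v)
    (hm : (m : ℂ) ≠ 0) (i : Fin m) : P i * G = 0 := by
  -- P i *ᵥ (G *ᵥ v) = 0 for all v
  have key : ∀ v : Fin D → ℂ, P i *ᵥ (G *ᵥ v) = 0 := by
    intro v
    set w := G *ᵥ v with hw
    have hGw : G *ᵥ w = w := by
      rw [hw, Matrix.mulVec_mulVec, hGidem]
    have hHw : (((1 : ℂ) / m) • ∑ i, P i) *ᵥ w = 0 := (hGker w).mpr hGw
    have hsum : (∑ j, P j) *ᵥ w = 0 := by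
      rw [Matrix.smul_mulVec] at hHw
      rcases smul_eq_zero.mp hHw with h | h
      · exact absurd h (by simpa using hm)
      · exact h
    -- each term of the nonneg sum vanishes
    have hterm : ∀ j, star w ⬝ᵥ (P j *ᵥ w) = star (P j *ᵥ w) ⬝ᵥ (P j *ᵥ w) := by
      intro j
      conv_rhs => rw [Matrix.star_mulVec, hherm j, ← Matrix.dotProduct_mulVec,
        Matrix.mulVec_mulVec, hidem j]
    have hnn : ∀ j, 0 ≤ star w ⬝ᵥ (P j *ᵥ w) := by
      intro j
      rw [hterm j]
      exact dotProduct_star_self_nonneg _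
    have hzero : ∑ j, star w ⬝ᵥ (P j *ᵥ w) = 0 := by
      have h1 : (∑ j, P j) *ᵥ w = ∑ j, P j *ᵥ w := by
        ext x
        simp [Matrix.mulVec, dotProduct, Matrix.sum_apply, Finset.sum_mul]
        rw [Finset.sum_comm]
      have : star w ⬝ᵥ ((∑ j, P j) *ᵥ w) = 0 := by rw [hsum, dotProduct_zero]
      rw [h1] at this
      rw [← this]
      simp [dotProduct, Finset.mul_sum, Finset.sum_apply]
      rw [Finset.sum_comm]
    have heach : star w ⬝ᵥ (P i *ᵥ w) = 0 :=
      (Finset.sum_eq_zero_iff_of_nonneg (fun j _ => hnn j)).mp hzero i (Finset.mem_univ i)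
    rw [hterm i] at heach
    exact dotProduct_star_self_eq_zero.mp heach
  -- conclude matrix identity
  ext x y
  have := congrFun (key (Pi.single y 1)) x
  rw [Matrix.mulVec_mulVec] at this
  rw [Matrix.mulVec_single] at this
  simpa using this


lemma hGP (hherm : ∀ i, (P i).IsHermitian) (hGherm : G.IsHermitian) (i : Fin m)
    (h : P i * G = 0) : G * P i = 0 := by
  have : (P i * G)ᴴ = 0 := by rw [h]; simp
  rwa [Matrix.conjTranspose_mul, hGherm, hherm i] at this

/-- the averaged conjugation map -/
noncomputable def psiM (P : Fin m → Matrix (Fin D) (Fin D) ℂ)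
    (X : Matrix (Fin D) (Fin D) ℂ) : Matrix (Fin D) (Fin D) ℂ :=
  ((1 : ℂ) / m) • ∑ k, (1 - P k) * X * (1 - P k)

lemma psi_add (X Y : Matrix (Fin D) (Fin D) ℂ) :
    psiM P (X + Y) = psiM P X + psiM P Y := by
  simp [psiM, mul_add, add_mul, Finset.sum_add_distrib, smul_add]

lemma psi_sub (X Y : Matrix (Fin D) (Fin D) ℂ) :
    psiM P (X - Y) = psiM P X - psiM P Y := by
  simp only [psiM, mul_sub, sub_mul, Finset.sum_sub_distrib, smul_sub]
  abel

lemma psi_smul (c : ℂ) (X : Matrix (Fin D) (Fin D) ℂ) :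
    psiM P (c • X) = c • psiM P X := by
  unfold psiM
  rw [smul_comm]
  congr 1
  rw [Finset.smul_sum]
  exact Finset.sum_congr rfl fun k _ => by rw [Matrix.mul_smul, Matrix.smul_mul]

lemma psi_sum {ι : Type*} (s : Finset ι) (f : ι → Matrix (Fin D) (Fin D) ℂ) :
    psiM P (∑ t ∈ s, f t) = ∑ t ∈ s, psiM P (f t) := by
  classical
  induction s using Finset.induction_on with
  | empty => simp [psiM]
  | insert _ _ hx ih =>
    rw [Finset.sum_insert hx, Finset.sum_insert hx, psi_add, ih]

lemma psi_G (hm : (m : ℂ) ≠ 0) (hQG : ∀ k, (1 - P k) * G = G)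
    (hGQ : ∀ k, G * (1 - P k) = G) : psiM P G = G := by
  rw [psiM]
  have : ∀ k : Fin m, (1 - P k) * G * (1 - P k) = G := by
    intro k; rw [hQG k, hGQ k]
  rw [Finset.sum_congr rfl fun k _ => this k]
  rw [Finset.sum_const, Finset.card_univ, Fintype.card_fin, ← Nat.cast_smul_eq_nsmul ℂ, smul_smul]
  rw [one_div, inv_mul_cancel₀ hm, one_smul]

lemma psi_one (hm : (m : ℂ) ≠ 0) (hidem : ∀ i, P i * P i = P i) :
    psiM P 1 = 1 - ((1 : ℂ) / m) • ∑ i, P i := by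
  rw [psiM]
  have h1 : ∀ k : Fin m, (1 - P k) * 1 * (1 - P k) = 1 - P k := by
    intro k
    rw [Matrix.mul_one, sub_mul, Matrix.one_mul, mul_sub, Matrix.mul_one, hidem k]
    abel
  rw [Finset.sum_congr rfl fun k _ => h1 k, Finset.sum_sub_distrib, Finset.sum_const,
    Finset.card_univ, Fintype.card_fin, smul_sub, ← Nat.cast_smul_eq_nsmul ℂ, smul_smul,
    one_div, inv_mul_cancel₀ hm, one_smul]

lemma psi_psd (hherm : ∀ i, (P i).IsHermitian) {X : Matrix (Fin D) (Fin D) ℂ}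
    (hX : X.PosSemidef) : (psiM P X).PosSemidef := by
  have hc : ((1:ℝ) / m : ℝ) ≥ 0 := by positivity
  have hsum : (∑ k, (1 - P k) * X * (1 - P k)).PosSemidef := by
    apply Finset.sum_induction (fun k => (1 - P k) * X * (1 - P k))
      (fun A : Matrix (Fin D) (Fin D) ℂ => A.PosSemidef)
      (fun A B hA hB => hA.add hB) Matrix.PosSemidef.zero
    intro k _
    refine psd_conj hX ?_
    simp [Matrix.IsHermitian, Matrix.conjTranspose_sub, (hherm k).eq]
  have := smulPSD ((1:ℝ)/m) hc hsum
  rwa [show (((1:ℝ)/m : ℝ) : ℂ) = (1:ℂ)/m by push_cast; ring] at this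

lemma psi_mono (hherm : ∀ i, (P i).IsHermitian) {X Y : Matrix (Fin D) (Fin D) ℂ}
    (h : (X - Y).PosSemidef) : (psiM P X - psiM P Y).PosSemidef := by
  rw [← psi_sub]
  exact psi_psd P hherm h

noncomputable def BpM (t : ℕ) : Matrix (Fin D) (Fin D) ℂ :=
  ((1 : ℂ) / (m : ℂ) ^ t) • BB P t - G

lemma B_succ (t : ℕ) :
    ((1 : ℂ) / (m : ℂ) ^ (t + 1)) • BB P (t + 1)
      = psiM P (((1 : ℂ) / (m : ℂ) ^ t) • BB P t) := by
  rw [BB_succ, psi_smul, psiM, smul_smul]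
  congr 1
  rw [pow_succ]
  ring

lemma Bp_zero : BpM P G 0 = 1 - G := by
  simp [BpM, BB_zero]

lemma Bp_succ (hm : (m : ℂ) ≠ 0) (hQG : ∀ k, (1 - P k) * G = G)
    (hGQ : ∀ k, G * (1 - P k) = G) (t : ℕ) :
    BpM P G (t + 1) = psiM P (BpM P G t) := by
  rw [BpM, BpM, psi_sub, psi_G P G hm hQG hGQ, B_succ]

lemma Bp_psd (hherm : ∀ i, (P i).IsHermitian) (hGherm : G.IsHermitian) (hGidem : G * G = G)
    (hm : (m : ℂ) ≠ 0) (hQG : ∀ k, (1 - P k) * G = G) (hGQ : ∀ k, G * (1 - P k) = G) :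
    ∀ t, (BpM P G t).PosSemidef := by
  intro t
  induction t with
  | zero =>
    rw [Bp_zero]
    refine proj_psd ?_ ?_
    · simp [Matrix.IsHermitian, Matrix.conjTranspose_sub, hGherm.eq]
    · rw [sub_mul, Matrix.one_mul, mul_sub, Matrix.mul_one, hGidem]
      abel
  | succ t ih =>
    rw [Bp_succ P G hm hQG hGQ]
    exact psi_psd P hherm ih

lemma claimLemma (hherm : ∀ i, (P i).IsHermitian) (hidem : ∀ i, P i * P i = P i)
    (hGherm : G.IsHermitian) (hGidem : G * G = G)
    (hm : (m : ℂ) ≠ 0) (hQG : ∀ k, (1 - P k) * G = G) (hGQ : ∀ k, G * (1 - P k) = G)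
    (δ : ℝ) (hδ : 0 < δ)
    (hgap : ((((1 : ℂ) / m) • ∑ i, P i) - (δ : ℂ) • (1 - G)).PosSemidef) :
    ∀ T : ℕ, ((((1 / δ : ℝ)) : ℂ) • ((1 - G) - BpM P G (T + 1))
      - ∑ t ∈ Finset.range (T + 1), BpM P G t).PosSemidef := by
  have hcδ : (((1 / δ : ℝ)) : ℂ) * (δ : ℂ) = 1 := by
    push_cast
    field_simp
  have hgapscaled : ((((1 / δ : ℝ)) : ℂ) • (((1 : ℂ) / m) • ∑ i, P i) - (1 - G)).PosSemidef := by
    have h1 := smulPSD (1 / δ) (by positivity) hgap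
    rwa [smul_sub, smul_smul (((1 / δ : ℝ)) : ℂ) ((δ : ℂ)), hcδ, one_smul] at h1
  have hpsi1G : psiM P ((1 : Matrix (Fin D) (Fin D) ℂ) - G)
      = (1 - ((1 : ℂ) / m) • ∑ i, P i) - G := by
    rw [psi_sub, psi_one P hm hidem, psi_G P G hm hQG hGQ]
  intro T
  induction T with
  | zero =>
    rw [Finset.sum_range_one, Bp_zero, show (0 : ℕ) + 1 = 1 from rfl,
      Bp_succ P G hm hQG hGQ 0, Bp_zero, hpsi1G]
    have e : (((1 / δ : ℝ)) : ℂ) • ((1 - G) - ((1 - ((1 : ℂ) / m) • ∑ i, P i) - G)) - (1 - G)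
        = (((1 / δ : ℝ)) : ℂ) • (((1 : ℂ) / m) • ∑ i, P i) - (1 - G) := by
      module
    rw [e]
    exact hgapscaled
  | succ T ih =>
    have h1 := psi_mono P hherm ih
    have e1 : psiM P ((((1 / δ : ℝ)) : ℂ) • ((1 - G) - BpM P G (T + 1)))
        = (((1 / δ : ℝ)) : ℂ) • (((1 - ((1 : ℂ) / m) • ∑ i, P i) - G) - BpM P G (T + 1 + 1)) := by
      rw [psi_smul, psi_sub, hpsi1G, Bp_succ P G hm hQG hGQ (T + 1)]
    have e2 : psiM P (∑ t ∈ Finset.range (T + 1), BpM P G t)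
        = ∑ t ∈ Finset.range (T + 1), BpM P G (t + 1) := by
      rw [psi_sum]
      exact Finset.sum_congr rfl fun t _ => (Bp_succ P G hm hQG hGQ t).symm
    rw [e1, e2] at h1
    have h3 := h1.add hgapscaled
    have e3 : ((((1 / δ : ℝ)) : ℂ) • (((1 - ((1 : ℂ) / m) • ∑ i, P i) - G) - BpM P G (T + 1 + 1))
          - ∑ t ∈ Finset.range (T + 1), BpM P G (t + 1))
          + ((((1 / δ : ℝ)) : ℂ) • (((1 : ℂ) / m) • ∑ i, P i) - (1 - G))
        = (((1 / δ : ℝ)) : ℂ) • ((1 - G) - BpM P G (T + 1 + 1))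
          - ∑ t ∈ Finset.range (T + 1 + 1), BpM P G t := by
      rw [Finset.sum_range_succ' (fun t => BpM P G t) (T + 1), Bp_zero]
      module
    rw [e3] at h3
    exact h3

end main

/-- **Proposition on the first violation with spectral gap, non-commuting
case.** With `H = (1/m) Σᵢ Πᵢ`, `G` the orthogonal projection onto `ker H`,
and spectral gap `H ≥ δ(I−G)`, the halting operator is `≤ (1/(mδ))(1/D) Π_a`. -/
theorem first_violation_bound_spectral_gap
    (D m : ℕ)
    (P : Fin m → Matrix (Fin D) (Fin D) ℂ)
    (hherm : ∀ i, (P i).IsHermitian)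
    (hidem : ∀ i, P i * P i = P i)
    (G : Matrix (Fin D) (Fin D) ℂ)
    (hGherm : G.IsHermitian) (hGidem : G * G = G)
    (hGker : ∀ v : Fin D → ℂ,
      (((1 : ℂ) / m) • ∑ i, P i).mulVec v = 0 ↔ G.mulVec v = v)
    (δ : ℝ) (hδ : 0 < δ)
    (hgap : ((((1 : ℂ) / m) • ∑ i, P i) - (δ : ℂ) • (1 - G)).PosSemidef)
    (a : Fin m) (T : ℕ) :
    (((1 / ((m : ℝ) * δ * D) : ℝ) : ℂ) • P a - haltMat P a T).PosSemidef ∧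
    (haltMat P a T).trace.re ≤ ((P a).rank : ℝ) / ((m : ℝ) * δ * D) := by
  have hmpos : 0 < m := a.pos
  have hm : (m : ℂ) ≠ 0 := Nat.cast_ne_zero.mpr hmpos.ne'
  have hPG' : ∀ i, P i * G = 0 := fun i => hPG P G hherm hidem hGidem hGker hm i
  have hGP' : ∀ i, G * P i = 0 := fun i => hGP P G hherm hGherm i (hPG' i)
  have hQG : ∀ k, (1 - P k) * G = G := fun k => by
    rw [sub_mul, Matrix.one_mul, hPG' k, sub_zero]
  have hGQ : ∀ k, G * (1 - P k) = G := fun k => by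
    rw [mul_sub, Matrix.mul_one, hGP' k, sub_zero]
  have claim := claimLemma P G hherm hidem hGherm hGidem hm hQG hGQ δ hδ hgap T
  have hBpsd := Bp_psd P G hherm hGherm hGidem hm hQG hGQ (T + 1)
  have h4 : ((((1 / δ : ℝ)) : ℂ) • (1 - G)
      - ∑ t ∈ Finset.range (T + 1), BpM P G t).PosSemidef := by
    have h := claim.add (smulPSD (1 / δ) (by positivity) hBpsd)
    have e : ((((1 / δ : ℝ)) : ℂ) • ((1 - G) - BpM P G (T + 1))
          - ∑ t ∈ Finset.range (T + 1), BpM P G t)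
          + ((((1 / δ : ℝ)) : ℂ) • BpM P G (T + 1))
        = (((1 / δ : ℝ)) : ℂ) • (1 - G) - ∑ t ∈ Finset.range (T + 1), BpM P G t := by
      module
    rwa [e] at h
  have h5 := psd_conj h4 (hherm a)
  have e5 : P a * ((((1 / δ : ℝ)) : ℂ) • (1 - G) - ∑ t ∈ Finset.range (T + 1), BpM P G t) * P a
      = (((1 / δ : ℝ)) : ℂ) • P a
        - ∑ t ∈ Finset.range (T + 1), ((1 : ℂ) / (m : ℂ) ^ t) • (P a * BB P t * P a) := by
    rw [mul_sub, sub_mul]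
    congr 1
    · rw [Matrix.mul_smul, Matrix.smul_mul, mul_sub, Matrix.mul_one, hPG' a, sub_zero, hidem a]
    · rw [Finset.mul_sum, Finset.sum_mul]
      refine Finset.sum_congr rfl fun t _ => ?_
      rw [BpM, mul_sub, hPG' a, sub_zero, Matrix.mul_smul, Matrix.smul_mul]
  rw [e5] at h5
  have e6 : haltMat P a T = (((1 : ℂ) / m) * ((1 : ℂ) / D))
      • ∑ t ∈ Finset.range (T + 1), ((1 : ℂ) / (m : ℂ) ^ t) • (P a * BB P t * P a) := by
    rw [haltMat, mul_smul]
    congr 1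
    rw [Finset.smul_sum]
    refine Finset.sum_congr rfl fun t _ => ?_
    have inner : ∀ i : Fin t → Fin m,
        P a * chainRev P t i * (((1 : ℂ) / D) • 1) * chainFwd P t i * P a
          = ((1 : ℂ) / D) • (P a * (chainRev P t i * chainFwd P t i) * P a) := by
      intro i
      simp only [Matrix.mul_smul, Matrix.mul_one, Matrix.smul_mul, Matrix.mul_assoc]
    rw [Finset.sum_congr rfl fun i _ => inner i, ← Finset.smul_sum, smul_comm]
    congr 2
    rw [BB, Finset.mul_sum, Finset.sum_mul]
  constructor
  · have h6 := smulPSD (1 / ((m : ℝ) * D)) (by positivity) h5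
    have efin : ((1 / ((m : ℝ) * δ * D) : ℝ) : ℂ) • P a - haltMat P a T
        = ((1 / ((m : ℝ) * D) : ℝ) : ℂ) • ((((1 / δ : ℝ)) : ℂ) • P a
          - ∑ t ∈ Finset.range (T + 1), ((1 : ℂ) / (m : ℂ) ^ t) • (P a * BB P t * P a)) := by
      rw [e6, smul_sub, smul_smul]
      congr 1
      · congr 1
        push_cast
        ring
      · congr 1
        push_cast
        ring
    rw [efin]
    exact h6
  · have goal1 : (((1 / ((m : ℝ) * δ * D) : ℝ) : ℂ) • P a - haltMat P a T).PosSemidef := by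
      have h6 := smulPSD (1 / ((m : ℝ) * D)) (by positivity) h5
      have efin : ((1 / ((m : ℝ) * δ * D) : ℝ) : ℂ) • P a - haltMat P a T
          = ((1 / ((m : ℝ) * D) : ℝ) : ℂ) • ((((1 / δ : ℝ)) : ℂ) • P a
            - ∑ t ∈ Finset.range (T + 1), ((1 : ℂ) / (m : ℂ) ^ t) • (P a * BB P t * P a)) := by
        rw [e6, smul_sub, smul_smul]
        congr 1
        · congr 1
          push_cast
          ring
        · congr 1
          push_cast
          ring
      rw [efin]
      exact h6
    have htr := psdTraceRe goal1
    rw [Matrix.trace_sub, Complex.sub_re, Matrix.trace_smul, smul_eq_mul,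
      Complex.re_ofReal_mul] at htr
    have hrk : ((P a).rank : ℝ) = (P a).trace.re := rank_proj_eq_trace (hherm a) (hidem a)
    rw [hrk]
    have : (P a).trace.re / ((m : ℝ) * δ * D) = 1 / ((m : ℝ) * δ * D) * (P a).trace.re := by
      ring
    rw [this]
    linarith
end
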